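/- arXiv:2401.06353 — 10 statements merged into one kernel-verified Lean document; each statement's English description precedes it below -/
import Mathlib

section
/- Let M be an atomic additive submonoid of the rationals ℚ that is not a group. Then M does not simultaneously contain a positive and a negative rational number. -/
/-- An element `x` is a unit in the additive submonoid `M` if both `x` and `-x` lie in `M`. -/
def AddIsUnitIn {G : Type*} [AddCommGroup G] (M : AddSubmonoid G) (x : G) : Prop :=
  x ∈ M ∧ -x ∈ M

/-- `a` is an atom of `M`: a non-unit element of `M` that is not a sum of two non-units of `M`. -/
def AddIsAtomIn {G : Type*} [AddCommGroup G] (M : AddSubmonoid G) (a : G) : Prop :=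
  a ∈ M ∧ ¬ AddIsUnitIn M a ∧
    ∀ b c : G, b ∈ M → c ∈ M → a = b + c → AddIsUnitIn M b ∨ AddIsUnitIn M c

/-- `M` is atomic: every non-unit element of `M` is a finite sum of atoms of `M`. -/
def AddIsAtomicIn {G : Type*} [AddCommGroup G] (M : AddSubmonoid G) : Prop :=
  ∀ x ∈ M, ¬ AddIsUnitIn M x →
    ∃ s : Multiset G, (∀ a ∈ s, AddIsAtomIn M a) ∧ s.sum = x

lemma neg_mem_of_mixed (M : AddSubmonoid ℚ) {a b : ℚ} (ha : a ∈ M) (hb : b ∈ M)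
    (ha0 : 0 < a) (hb0 : b < 0) : -a ∈ M ∧ -b ∈ M := by
  set t : ℚ := a / (-b) with ht
  have htpos : 0 < t := div_pos ha0 (by linarith)
  have hnum : 0 < t.num := Rat.num_pos.mpr htpos
  have hden : 0 < t.den := t.pos
  have hN : ((t.num.toNat : ℕ) : ℚ) = (t.num : ℚ) := by
    exact_mod_cast congrArg (fun z : ℤ => (z : ℚ)) (Int.toNat_of_nonneg hnum.le)
  have hb' : (-b : ℚ) ≠ 0 := by linarith
  have key : (t.den : ℚ) * a = (t.num : ℚ) * (-b) := by
    have h1 : a = t * (-b) := by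
      rw [ht, div_mul_cancel₀ _ hb']
    have hden' : ((t.den : ℚ)) ≠ 0 := by
      exact_mod_cast hden.ne'
    have h2 : (t.num : ℚ) = t * t.den := by
      exact (div_eq_iff hden').mp (Rat.num_div_den t)
    rw [h1, h2]; ring
  have hd1 : ((t.den - 1 : ℕ) : ℚ) = (t.den : ℚ) - 1 := by
    rw [Nat.cast_sub hden, Nat.cast_one]
  have h1le : 1 ≤ t.num.toNat := by omega
  have hn1 : ((t.num.toNat - 1 : ℕ) : ℚ) = (t.num : ℚ) - 1 := by
    rw [Nat.cast_sub h1le, Nat.cast_one, hN]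
  constructor
  · have hmem : (t.den - 1) • a + t.num.toNat • b ∈ M :=
      M.add_mem (M.nsmul_mem ha _) (M.nsmul_mem hb _)
    have heq : (t.den - 1) • a + t.num.toNat • b = -a := by
      rw [nsmul_eq_mul, nsmul_eq_mul, hd1, hN]
      linear_combination key
    rwa [heq] at hmem
  · have hmem : t.den • a + (t.num.toNat - 1) • b ∈ M :=
      M.add_mem (M.nsmul_mem ha _) (M.nsmul_mem hb _)
    have heq : t.den • a + (t.num.toNat - 1) • b = -b := by
      rw [nsmul_eq_mul, nsmul_eq_mul, hn1]
      linear_combination key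
    rwa [heq] at hmem

/-- An atomic additive submonoid of `ℚ` which is not a group cannot contain simultaneously
a positive and a negative rational number. -/
theorem atomic_submonoid_of_rat_not_mixed_signs (M : AddSubmonoid ℚ)
    (hatomic : AddIsAtomicIn M) (hnotgroup : ∃ x ∈ M, -x ∉ M) :
    ¬ ((∃ q ∈ M, (0 : ℚ) < q) ∧ (∃ r ∈ M, r < 0)) := by
  rintro ⟨⟨q, hq, hq0⟩, ⟨r, hr, hr0⟩⟩
  obtain ⟨x, hx, hnx⟩ := hnotgroup
  apply hnx
  rcases lt_trichotomy x 0 with h | h | h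
  · exact (neg_mem_of_mixed M hq hx hq0 h).2
  · simpa [h] using M.zero_mem
  · exact (neg_mem_of_mixed M hx hr h hr0).1
end

section
/- Let M be an atomic additive submonoid of ℚ_{≥0} that is not of the form s·ℕ₀ for any positive rational s. Then M contains no strong atoms. -/
/-- `a` is a strong atom of `M`: an atom all of whose multiples `n • a` factor uniquely
into atoms of `M` (namely as `n` copies of `a`). -/
def AddIsStrongAtomIn {G : Type*} [AddCommGroup G] (M : AddSubmonoid G) (a : G) : Prop :=
  AddIsAtomIn M a ∧ ∀ n : ℕ, 0 < n → ∀ s : Multiset G,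
    (∀ b ∈ s, AddIsAtomIn M b) → s.sum = n • a → s = Multiset.replicate n a

/-- An atomic additive submonoid of the nonnegative rationals that is not of the form
`s·ℕ₀` for any positive rational `s` contains no strong atoms. -/
theorem no_strong_atoms_of_atomic_submonoid_of_nonneg_rat (M : AddSubmonoid ℚ)
    (hnonneg : ∀ x ∈ M, (0 : ℚ) ≤ x) (hatomic : AddIsAtomicIn M)
    (hns : ∀ s : ℚ, 0 < s → (M : Set ℚ) ≠ {x : ℚ | ∃ n : ℕ, x = n • s}) :
    ∀ a : ℚ, ¬ AddIsStrongAtomIn M a := by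
  rintro a ⟨hatom, hstrong⟩
  classical
  have h0unit : AddIsUnitIn M 0 := ⟨M.zero_mem, by simpa using M.zero_mem⟩
  have hunit0 : ∀ x ∈ M, AddIsUnitIn M x → x = 0 := by
    rintro x hx ⟨h1, h2⟩
    have h3 := hnonneg x h1
    have h4 := hnonneg _ h2
    linarith
  have haM := hatom.1
  have hapos : 0 < a :=
    (hnonneg a haM).lt_of_ne fun h => hatom.2.1 (h ▸ h0unit)
  -- every atom of M equals a
  have hatoms_eq : ∀ b : ℚ, AddIsAtomIn M b → b = a := by
    intro b hb
    have hbpos : 0 < b :=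
      (hnonneg b hb.1).lt_of_ne fun h => hb.2.1 (h ▸ h0unit)
    set r : ℚ := a / b with hr
    have hrpos : 0 < r := div_pos hapos hbpos
    have hnumpos : 0 < r.num := Rat.num_pos.mpr hrpos
    set p : ℕ := r.num.toNat with hp
    set q : ℕ := r.den with hq
    have hppos : 0 < p := by omega
    have hqpos : 0 < q := r.pos
    have hkey : (q : ℚ) * a = (p : ℚ) * b := by
      have h1 : ((r.num : ℚ)) = r * (q : ℚ) := by
        rw [hq]; exact (Rat.mul_den_eq_num r).symm
      have h2 : ((p : ℚ)) = ((r.num : ℚ)) := by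
        norm_cast
        simp [hp, Int.toNat_of_nonneg hnumpos.le]
      rw [h2, h1, hr]
      field_simp
    have hsum : (Multiset.replicate p b).sum = q • a := by
      rw [Multiset.sum_replicate]
      rw [nsmul_eq_mul, nsmul_eq_mul, hkey]
    have hrep := hstrong q hqpos (Multiset.replicate p b)
      (fun c hc => by rwa [Multiset.eq_of_mem_replicate hc]) hsum
    have hbmem : b ∈ Multiset.replicate p b := Multiset.mem_replicate.mpr ⟨hppos.ne', rfl⟩
    rw [hrep] at hbmem
    exact Multiset.eq_of_mem_replicate hbmem
  -- M = ℕ • a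
  have hMeq : (M : Set ℚ) = {x : ℚ | ∃ n : ℕ, x = n • a} := by
    ext x
    constructor
    · intro hx
      by_cases hu : AddIsUnitIn M x
      · exact ⟨0, by simpa using hunit0 x hx hu⟩
      · obtain ⟨s, hs, hsum⟩ := hatomic x hx hu
        refine ⟨Multiset.card s, ?_⟩
        have : s = Multiset.replicate (Multiset.card s) a := by
          apply Multiset.eq_replicate_card.mpr
          intro c hc
          exact hatoms_eq c (hs c hc)
        rw [← hsum, this, Multiset.sum_replicate, Multiset.card_replicate]
    · rintro ⟨n, rfl⟩
      exact AddSubmonoid.nsmul_mem M haM n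
  exact hns a hapos hMeq
end

section
/- The additive monoid M₀ generated by the set {1/p : p prime} inside ℚ is atomic, its set of atoms is exactly {1/p : p prime}, and M₀ has no prime elements and no strong atoms. -/
/-- `p` is a prime element of `M`: a non-unit of `M` such that whenever `p` divides
`b + c` in `M`, it divides `b` or `c` in `M`. -/
def AddIsPrimeIn {G : Type*} [AddCommGroup G] (M : AddSubmonoid G) (p : G) : Prop :=
  p ∈ M ∧ ¬ AddIsUnitIn M p ∧
    ∀ b c : G, b ∈ M → c ∈ M → (∃ d ∈ M, b + c = p + d) →
      (∃ d ∈ M, b = p + d) ∨ (∃ d ∈ M, c = p + d)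

namespace RecipPrimes

open Finset

/-- The generating set. -/
def genSet : Set ℚ := {q : ℚ | ∃ p : ℕ, Nat.Prime p ∧ q = (p : ℚ)⁻¹}

/-- The monoid. -/
def M0 : AddSubmonoid ℚ := AddSubmonoid.closure genSet

lemma gen_mem {p : ℕ} (hp : p.Prime) : ((p : ℚ))⁻¹ ∈ M0 :=
  AddSubmonoid.subset_closure ⟨p, hp, rfl⟩

lemma repr {x : ℚ} (hx : x ∈ M0) :
    ∃ P : Multiset ℕ, (∀ q ∈ P, Nat.Prime q) ∧ (P.map fun q : ℕ => ((q : ℚ))⁻¹).sum = x := by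
  obtain ⟨s, hs, hsum⟩ := AddSubmonoid.exists_multiset_of_mem_closure hx
  refine ⟨s.map Rat.den, ?_, ?_⟩
  · intro q hq
    simp only [Multiset.mem_map] at hq
    obtain ⟨y, hy, rfl⟩ := hq
    obtain ⟨p, hp, rfl⟩ := hs y hy
    rwa [Rat.inv_natCast_den_of_pos hp.pos]
  · rw [Multiset.map_map, ← hsum]
    congr 1
    conv_rhs => rw [← Multiset.map_id s]
    apply Multiset.map_congr rfl
    intro y hy
    obtain ⟨p, hp, rfl⟩ := hs y hy
    simp [Function.comp, Rat.inv_natCast_den_of_pos hp.pos]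

lemma mem_of_prime_sum (P : Multiset ℕ) (hP : ∀ q ∈ P, Nat.Prime q) :
    (P.map fun q : ℕ => ((q : ℚ))⁻¹).sum ∈ M0 := by
  apply multiset_sum_mem
  intro x hx
  simp only [Multiset.mem_map] at hx
  obtain ⟨q, hq, rfl⟩ := hx
  exact gen_mem (hP q hq)

lemma M0_nonneg {x : ℚ} (hx : x ∈ M0) : 0 ≤ x := by
  obtain ⟨P, hP, rfl⟩ := repr hx
  apply Multiset.sum_nonneg
  intro y hy
  simp only [Multiset.mem_map] at hy
  obtain ⟨q, hq, rfl⟩ := hy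
  positivity

lemma unit_iff {x : ℚ} : AddIsUnitIn M0 x ↔ x = 0 := by
  constructor
  · rintro ⟨h1, h2⟩
    have a1 := M0_nonneg h1
    have a2 := M0_nonneg h2
    linarith
  · rintro rfl
    exact ⟨zero_mem _, by simpa using zero_mem M0⟩

lemma clean_add {r : ℕ} (hr : r.Prime) {x y : ℚ}
    (hx : ¬ r ∣ x.den) (hy : ¬ r ∣ y.den) : ¬ r ∣ (x + y).den := fun h =>
  ((hr.dvd_mul.mp (h.trans (Rat.add_den_dvd x y))).elim hx hy)

lemma clean_sub {r : ℕ} (hr : r.Prime) {x y : ℚ}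
    (hx : ¬ r ∣ x.den) (hy : ¬ r ∣ y.den) : ¬ r ∣ (x - y).den := by
  rw [sub_eq_add_neg]
  exact clean_add hr hx (by rwa [Rat.den_neg_eq_den])

lemma clean_sum {r : ℕ} (hr : r.Prime) (U : Finset ℕ) (f : ℕ → ℚ)
    (h : ∀ u ∈ U, ¬ r ∣ (f u).den) : ¬ r ∣ (∑ u ∈ U, f u).den := by
  classical
  induction U using Finset.induction_on with
  | empty =>
    intro hd
    rw [Finset.sum_empty] at hd
    exact hr.one_lt.ne' (Nat.eq_one_of_dvd_one (by simpa using hd))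
  | @insert a s ha ih =>
    rw [Finset.sum_insert ha]
    exact clean_add hr (h a (Finset.mem_insert_self _ _))
      (ih fun u hu => h u (Finset.mem_insert_of_mem hu))

lemma den_smul_inv_dvd (m q : ℕ) : ((m • ((q : ℚ))⁻¹).den : ℤ) ∣ (q : ℤ) := by
  have h : (m • ((q : ℚ))⁻¹) = Rat.divInt (m : ℤ) (q : ℤ) := by
    rw [Rat.divInt_eq_div, nsmul_eq_mul, div_eq_mul_inv]
    push_cast
    ring
  rw [h]
  exact Rat.den_dvd _ _

lemma clean_smul_inv {r q : ℕ} (hr : r.Prime) (hq : q.Prime) (hne : q ≠ r) (m : ℕ) :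
    ¬ r ∣ ((m • ((q : ℚ))⁻¹).den) := by
  intro hd
  have h2 : ((m • ((q : ℚ))⁻¹).den : ℤ) ∣ (q : ℤ) := den_smul_inv_dvd m q
  have h3 : r ∣ q := by exact_mod_cast (Int.natCast_dvd_natCast.mpr hd).trans h2
  exact hne ((Nat.prime_dvd_prime_iff_eq hr hq).mp h3).symm

lemma clean_inv {r q : ℕ} (hr : r.Prime) (hq : q.Prime) (hne : q ≠ r) :
    ¬ r ∣ (((q : ℚ))⁻¹).den := by
  have := clean_smul_inv hr hq hne 1
  rwa [one_nsmul] at this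

lemma dvd_of_div_eq_clean {t : ℕ} (ht : t.Prime) {a : ℤ} {x : ℚ}
    (hx : ¬ t ∣ x.den) (h : (a : ℚ) * ((t : ℚ))⁻¹ = x) : (t : ℤ) ∣ a := by
  have ht0 : ((t : ℚ)) ≠ 0 := Nat.cast_ne_zero.mpr ht.pos.ne'
  have hxd : (x.den : ℤ) ∣ (t : ℤ) := by
    have h1 : x = Rat.divInt (a : ℤ) (t : ℤ) := by
      rw [Rat.divInt_eq_div, div_eq_mul_inv, ← h]
      push_cast
      ring
    rw [h1]
    exact Rat.den_dvd _ _
  have hxd' : x.den ∣ t := by exact_mod_cast hxd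
  have hone : x.den = 1 := by
    rcases (Nat.Prime.eq_one_or_self_of_dvd ht _ hxd') with h1 | h1
    · exact h1
    · exact absurd (h1 ▸ dvd_refl t) hx
  have hnum : ((x.num : ℚ)) = x := (Rat.den_eq_one_iff x).mp hone
  have ha : (a : ℚ) = (x.num : ℚ) * t := by
    rw [← hnum] at h
    field_simp at h
    linarith [h]
  refine ⟨x.num, ?_⟩
  have h5 : (a : ℚ) = ((t * x.num : ℤ) : ℚ) := by push_cast; linarith [ha]
  exact_mod_cast h5

/-- Residue extraction: matching coefficients of `1/t` modulo `t`. -/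
lemma residue {t : ℕ} (ht : t.Prime) {a b : ℤ} {X Y : ℚ}
    (hX : ¬ t ∣ X.den) (hY : ¬ t ∣ Y.den)
    (h : (a : ℚ) * ((t : ℚ))⁻¹ + X = (b : ℚ) * ((t : ℚ))⁻¹ + Y) : (t : ℤ) ∣ a - b := by
  apply dvd_of_div_eq_clean ht (x := Y - X) (clean_sub ht hY hX)
  push_cast
  ring_nf
  ring_nf at h
  linarith [h]

/-- Peeling off the `1/r`-component of an element of `M0`. -/
lemma peel {r : ℕ} (hr : r.Prime) {x : ℚ} (hx : x ∈ M0) :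
    ∃ (m : ℕ) (y : ℚ), y ∈ M0 ∧ 0 ≤ y ∧ ¬ r ∣ y.den ∧ x = m • ((r : ℚ))⁻¹ + y := by
  classical
  obtain ⟨P, hP, rfl⟩ := repr hx
  refine ⟨P.count r, ((P.filter (· ≠ r)).map fun q : ℕ => ((q : ℚ))⁻¹).sum, ?_, ?_, ?_, ?_⟩
  · exact mem_of_prime_sum _ fun q hq => hP q (Multiset.mem_of_mem_filter hq)
  · apply Multiset.sum_nonneg
    intro y hy
    simp only [Multiset.mem_map] at hy
    obtain ⟨q, hq, rfl⟩ := hy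
    exact inv_nonneg.mpr (Nat.cast_nonneg q)
  · -- cleanliness
    have : ∀ s : Multiset ℚ, (∀ y ∈ s, ¬ r ∣ y.den) → ¬ r ∣ s.sum.den := by
      intro s
      induction s using Multiset.induction_on with
      | empty =>
        intro _ hd
        rw [Multiset.sum_zero] at hd
        exact hr.one_lt.ne' (Nat.eq_one_of_dvd_one (by simpa using hd))
      | cons a s ih =>
        intro hs
        rw [Multiset.sum_cons]
        exact clean_add hr (hs a (Multiset.mem_cons_self _ _))
          (ih fun y hy => hs y (Multiset.mem_cons_of_mem hy))
    apply this
    intro y hy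
    simp only [Multiset.mem_map, Multiset.mem_filter] at hy
    obtain ⟨q, ⟨hq, hqr⟩, rfl⟩ := hy
    exact clean_inv hr (hP q hq) hqr
  · -- the sum splits
    have hsplit : P = P.filter (· = r) + P.filter (· ≠ r) := by
      rw [Multiset.filter_add_not]
    conv_lhs => rw [hsplit]
    rw [Multiset.map_add, Multiset.sum_add]
    congr 1
    rw [show (P.filter (· = r)) = Multiset.replicate (P.count r) r from Multiset.filter_eq' P r,
      Multiset.map_replicate, Multiset.sum_replicate]

lemma inv_pos_of_prime {p : ℕ} (hp : p.Prime) : (0 : ℚ) < ((p : ℚ))⁻¹ := by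
  have : (0 : ℚ) < (p : ℚ) := by exact_mod_cast hp.pos
  positivity

lemma gen_atom {p : ℕ} (hp : p.Prime) : AddIsAtomIn M0 ((p : ℚ))⁻¹ := by
  refine ⟨gen_mem hp, ?_, ?_⟩
  · rw [unit_iff]
    exact (inv_pos_of_prime hp).ne'
  · intro b c hb hc habc
    by_contra hcon
    push_neg at hcon
    obtain ⟨hbu, hcu⟩ := hcon
    have hb0 : 0 < b := (M0_nonneg hb).lt_of_ne (fun h => hbu (unit_iff.mpr h.symm))
    have hc0 : 0 < c := (M0_nonneg hc).lt_of_ne (fun h => hcu (unit_iff.mpr h.symm))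
    obtain ⟨mb, yb, hybM, hyb0, hybc, hbe⟩ := peel hp hb
    obtain ⟨mc, yc, hycM, hyc0, hycc, hce⟩ := peel hp hc
    have hmb : mb = 0 := by
      by_contra hne
      have h1 : (1 : ℚ) ≤ (mb : ℚ) := by exact_mod_cast Nat.one_le_iff_ne_zero.mpr hne
      have h2 : (1 : ℚ) * ((p : ℚ))⁻¹ ≤ (mb : ℚ) * ((p : ℚ))⁻¹ :=
        mul_le_mul_of_nonneg_right h1 (inv_pos_of_prime hp).le
      rw [nsmul_eq_mul] at hbe
      linarith
    have hmc : mc = 0 := by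
      by_contra hne
      have h1 : (1 : ℚ) ≤ (mc : ℚ) := by exact_mod_cast Nat.one_le_iff_ne_zero.mpr hne
      have h2 : (1 : ℚ) * ((p : ℚ))⁻¹ ≤ (mc : ℚ) * ((p : ℚ))⁻¹ :=
        mul_le_mul_of_nonneg_right h1 (inv_pos_of_prime hp).le
      rw [nsmul_eq_mul] at hce
      linarith
    have h1 : ((p : ℚ))⁻¹ = yb + yc := by
      rw [habc, hbe, hce, hmb, hmc]
      simp
    have h2 : ¬ p ∣ (((p : ℚ))⁻¹).den := h1 ▸ clean_add hp hybc hycc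
    rw [Rat.inv_natCast_den_of_pos hp.pos] at h2
    exact h2 dvd_rfl

lemma atom_gen {a : ℚ} (ha : AddIsAtomIn M0 a) : a ∈ genSet := by
  obtain ⟨haM, hau, hsplit⟩ := ha
  obtain ⟨P, hP, hsum⟩ := repr haM
  rcases eq_or_ne P 0 with rfl | hne
  · exact absurd (unit_iff.mpr (by simpa using hsum.symm)) hau
  · obtain ⟨q, hq⟩ := Multiset.exists_mem_of_ne_zero hne
    obtain ⟨P', rfl⟩ := Multiset.exists_cons_of_mem hq
    have hq' : Nat.Prime q := hP q (Multiset.mem_cons_self _ _)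
    have hrest : ((P'.map fun t : ℕ => ((t : ℚ))⁻¹).sum) ∈ M0 :=
      mem_of_prime_sum _ fun t ht => hP t (Multiset.mem_cons_of_mem ht)
    have hdecomp : a = ((q : ℚ))⁻¹ + (P'.map fun t : ℕ => ((t : ℚ))⁻¹).sum := by
      rw [← hsum, Multiset.map_cons, Multiset.sum_cons]
    rcases hsplit _ _ (gen_mem hq') hrest hdecomp with h | h
    · exact absurd (unit_iff.mp h) (inv_pos_of_prime hq').ne'
    · exact ⟨q, hq', by rw [hdecomp, unit_iff.mp h, add_zero]⟩

lemma atomic : AddIsAtomicIn M0 := by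
  intro x hx _
  obtain ⟨P, hP, rfl⟩ := repr hx
  refine ⟨P.map fun q : ℕ => ((q : ℚ))⁻¹, ?_, rfl⟩
  intro a ha
  simp only [Multiset.mem_map] at ha
  obtain ⟨q, hq, rfl⟩ := ha
  exact gen_atom (hP q hq)

lemma no_strong (a : ℚ) : ¬ AddIsStrongAtomIn M0 a := by
  rintro ⟨ha, hstrong⟩
  obtain ⟨p, hp, rfl⟩ := atom_gen ha
  set q : ℕ := if p = 2 then 3 else 2 with hqdef
  have hq : q.Prime := by
    rw [hqdef]; split_ifs <;> norm_num
  have hqp : q ≠ p := by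
    rw [hqdef]; split_ifs with h
    · omega
    · omega
  have hsum : ((Multiset.replicate q ((q : ℚ))⁻¹).sum) = p • ((p : ℚ))⁻¹ := by
    rw [Multiset.sum_replicate, nsmul_eq_mul, nsmul_eq_mul,
      mul_inv_cancel₀ (by exact_mod_cast hq.pos.ne' : ((q : ℚ)) ≠ 0),
      mul_inv_cancel₀ (by exact_mod_cast hp.pos.ne' : ((p : ℚ)) ≠ 0)]
  have heq := hstrong p hp.pos _
    (fun b hb => by rw [Multiset.eq_of_mem_replicate hb]; exact gen_atom hq) hsum
  have hmem : ((q : ℚ))⁻¹ ∈ Multiset.replicate p ((p : ℚ))⁻¹ := by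
    rw [← heq]
    exact Multiset.mem_replicate.mpr ⟨hq.pos.ne', rfl⟩
  have h2 : ((q : ℚ))⁻¹ = ((p : ℚ))⁻¹ := Multiset.eq_of_mem_replicate hmem
  have h3 : ((q : ℚ)) = ((p : ℚ)) := by
    rw [← inv_inv ((q : ℚ)), h2, inv_inv]
  exact hqp (by exact_mod_cast h3)

lemma no_prime (p : ℚ) : ¬ AddIsPrimeIn M0 p := by
  classical
  rintro ⟨hpM, hpu, hp⟩
  have hp0 : 0 < p := (M0_nonneg hpM).lt_of_ne (fun h => hpu (unit_iff.mpr h.symm))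
  obtain ⟨P, hPprime, hPsum⟩ := repr hpM
  set T : Finset ℕ := P.toFinset with hT
  set n : ℕ → ℕ := fun q => P.count q with hn
  have hTprime : ∀ q ∈ T, Nat.Prime q := fun q hq => hPprime q (Multiset.mem_toFinset.mp hq)
  have hpsum : p = ∑ q ∈ T, (n q) • ((q : ℚ))⁻¹ := by
    simp only [hT, hn]
    rw [← hPsum, Finset.sum_multiset_map_count]
  set S : Finset ℕ := T.filter (fun q => n q % q ≠ 0) with hS
  have hSsub : S ⊆ T := Finset.filter_subset _ _
  have hSprime : ∀ q ∈ S, Nat.Prime q := fun q hq => hTprime q (hSsub hq)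
  set N : ℕ := ∑ q ∈ T, n q / q with hN
  have hsplit : p = (N : ℚ) + ∑ q ∈ S, (n q % q) • ((q : ℚ))⁻¹ := by
    have h1 : ∀ q ∈ T, (n q) • ((q : ℚ))⁻¹ = ((n q / q : ℕ) : ℚ) + (n q % q) • ((q : ℚ))⁻¹ := by
      intro q hq
      have hq0 : ((q : ℚ)) ≠ 0 := Nat.cast_ne_zero.mpr (hTprime q hq).pos.ne'
      rw [nsmul_eq_mul, nsmul_eq_mul]
      conv_lhs => rw [← Nat.div_add_mod (n q) q]
      push_cast
      field_simp
    have h2 : ∑ q ∈ S, (n q % q) • ((q : ℚ))⁻¹ = ∑ q ∈ T, (n q % q) • ((q : ℚ))⁻¹ := by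
      rw [hS]
      apply Finset.sum_filter_of_ne
      intro q hq hfq h0
      exact hfq (by rw [h0, zero_nsmul])
    rw [hpsum, Finset.sum_congr rfl h1, Finset.sum_add_distrib, h2, hN]
    congr 1
    exact (Nat.cast_sum T fun q => n q / q).symm
  set w : ℚ := ∑ q ∈ S, ((q - n q % q : ℕ)) • ((q : ℚ))⁻¹ with hw
  have hwM : w ∈ M0 := sum_mem fun q hq => nsmul_mem (gen_mem (hSprime q hq)) _
  have hw0 : (0 : ℚ) ≤ w := M0_nonneg hwM
  set k : ℕ := N + S.card with hk
  have hkp : (k : ℚ) - p = w := by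
    have h2 : ∀ q ∈ S, ((q - n q % q : ℕ)) • ((q : ℚ))⁻¹ = 1 - (n q % q) • ((q : ℚ))⁻¹ := by
      intro q hq
      have hqp := hSprime q hq
      have hq0 : ((q : ℚ)) ≠ 0 := Nat.cast_ne_zero.mpr hqp.pos.ne'
      have hlt : n q % q < q := Nat.mod_lt _ hqp.pos
      rw [nsmul_eq_mul, nsmul_eq_mul, Nat.cast_sub hlt.le]
      field_simp
    rw [hw, Finset.sum_congr rfl h2, Finset.sum_sub_distrib, Finset.sum_const, nsmul_eq_mul,
      mul_one, hsplit, hk]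
    push_cast
    ring
  have hk1 : 1 ≤ k := by
    rcases Nat.eq_zero_or_pos k with h0 | h
    · exfalso
      rw [h0] at hkp
      push_cast at hkp
      linarith
    · exact h
  obtain ⟨r, hrge, hrpr⟩ := Nat.exists_infinite_primes (max (T.sup id + 1) (⌈p⁻¹⌉₊ + 1))
  have hrT : r ∉ T := by
    intro h
    have h1 : r ≤ T.sup id := Finset.le_sup (f := id) h
    have h2 : T.sup id + 1 ≤ r := le_trans (le_max_left _ _) hrge
    omega
  have hrS : r ∉ S := fun h => hrT (hSsub h)
  have hr0 : (0 : ℚ) < r := by exact_mod_cast hrpr.pos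
  have hrinv : ((r : ℚ))⁻¹ < p := by
    have h1 : (p⁻¹ : ℚ) < r := by
      have h2 : ⌈p⁻¹⌉₊ + 1 ≤ r := le_trans (le_max_right _ _) hrge
      calc p⁻¹ ≤ (⌈p⁻¹⌉₊ : ℚ) := Nat.le_ceil _
        _ < r := by exact_mod_cast h2
    have h3 := inv_strictAnti₀ (inv_pos.mpr hp0) h1
    rwa [inv_inv] at h3
  have hbM : ((r : ℚ))⁻¹ ∈ M0 := gen_mem hrpr
  have hkr1 : 1 ≤ k * r := Nat.one_le_iff_ne_zero.mpr (Nat.mul_ne_zero (by omega) hrpr.pos.ne')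
  have hcEq : (k : ℚ) - ((r : ℚ))⁻¹ = ((k * r - 1 : ℕ)) • ((r : ℚ))⁻¹ := by
    rw [nsmul_eq_mul, Nat.cast_sub hkr1]
    push_cast
    field_simp
  have hcM : (k : ℚ) - ((r : ℚ))⁻¹ ∈ M0 := by
    rw [hcEq]
    exact nsmul_mem (gen_mem hrpr) _
  have hbc : ((r : ℚ))⁻¹ + ((k : ℚ) - ((r : ℚ))⁻¹) = p + w := by
    rw [← hkp]
    ring
  rcases hp _ _ hbM hcM ⟨w, hwM, hbc⟩ with ⟨d, hdM, hbd⟩ | ⟨d, hdM, hcd⟩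
  · have h0 := M0_nonneg hdM
    linarith
  · have hd : d = w - ((r : ℚ))⁻¹ := by linarith
    obtain ⟨Q, hQprime, hQsum⟩ := repr hdM
    set U : Finset ℕ := Q.toFinset with hU
    set m : ℕ → ℕ := fun u => Q.count u with hm
    set V : Finset ℕ := U ∪ insert r S with hV
    have hVprime : ∀ u ∈ V, Nat.Prime u := by
      intro u hu
      rcases Finset.mem_union.mp hu with h | h
      · exact hQprime u (Multiset.mem_toFinset.mp h)
      · rcases Finset.mem_insert.mp h with rfl | h
        · exact hrpr
        · exact hSprime u h
    have hdsum : d = ∑ u ∈ V, (m u) • ((u : ℚ))⁻¹ := by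
      have h1 : d = ∑ u ∈ U, (m u) • ((u : ℚ))⁻¹ := by
        simp only [hU, hm]
        rw [← hQsum, Finset.sum_multiset_map_count]
      rw [h1]
      apply Finset.sum_subset (Finset.subset_union_left)
      intro x _ hxU
      have h0 : m x = 0 := by
        simp only [hm]
        exact Multiset.count_eq_zero.mpr fun h => hxU (Multiset.mem_toFinset.mpr h)
      rw [h0, zero_nsmul]
    have hrV : r ∈ V := Finset.mem_union_right _ (Finset.mem_insert_self _ _)
    have hSV : ∀ q ∈ S, q ∈ V := fun q hq => Finset.mem_union_right _ (Finset.mem_insert_of_mem hq)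
    have hXr : ¬ r ∣ ((∑ u ∈ V.erase r, (m u) • ((u : ℚ))⁻¹).den) :=
      clean_sum hrpr _ _ fun u hu =>
        clean_smul_inv hrpr (hVprime u (Finset.mem_of_mem_erase hu)) (Finset.ne_of_mem_erase hu) _
    have hYw : ¬ r ∣ w.den := by
      rw [hw]
      exact clean_sum hrpr _ _ fun q hq =>
        clean_smul_inv hrpr (hSprime q hq) (fun he => hrS (he ▸ hq)) _
    have heqr : ((m r : ℤ) : ℚ) * ((r : ℚ))⁻¹ + (∑ u ∈ V.erase r, (m u) • ((u : ℚ))⁻¹)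
        = ((-1 : ℤ) : ℚ) * ((r : ℚ))⁻¹ + w := by
      have h5 : (m r) • ((r : ℚ))⁻¹ + (∑ u ∈ V.erase r, (m u) • ((u : ℚ))⁻¹)
          = w - ((r : ℚ))⁻¹ := by
        rw [Finset.add_sum_erase V (fun u => (m u) • ((u : ℚ))⁻¹) hrV, ← hdsum, hd]
      rw [nsmul_eq_mul] at h5
      push_cast
      linarith
    have hres_r := residue hrpr hXr hYw heqr
    have hmr : r ≤ m r + 1 := by
      have h6 : (r : ℤ) ∣ ((m r + 1 : ℕ) : ℤ) := by
        push_cast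
        simpa [sub_neg_eq_add] using hres_r
      exact Nat.le_of_dvd (Nat.succ_pos _) (by exact_mod_cast h6)
    have hmq : ∀ q ∈ S, q - n q % q ≤ m q := by
      intro q hqS
      have hq' := hSprime q hqS
      have hqr : q ≠ r := fun h => hrS (h ▸ hqS)
      have hqV : q ∈ V := hSV q hqS
      have hX : ¬ q ∣ ((∑ u ∈ V.erase q, (m u) • ((u : ℚ))⁻¹).den) :=
        clean_sum hq' _ _ fun u hu =>
          clean_smul_inv hq' (hVprime u (Finset.mem_of_mem_erase hu)) (Finset.ne_of_mem_erase hu) _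
      have hY : ¬ q ∣ (((∑ t ∈ S.erase q, ((t - n t % t : ℕ)) • ((t : ℚ))⁻¹) - ((r : ℚ))⁻¹).den) := by
        apply clean_sub hq'
        · exact clean_sum hq' _ _ fun t ht =>
            clean_smul_inv hq' (hSprime t (Finset.mem_of_mem_erase ht)) (Finset.ne_of_mem_erase ht) _
        · exact clean_inv hq' hrpr (Ne.symm hqr)
      have heqq : ((m q : ℤ) : ℚ) * ((q : ℚ))⁻¹ + (∑ u ∈ V.erase q, (m u) • ((u : ℚ))⁻¹)
          = (((q - n q % q : ℕ) : ℤ) : ℚ) * ((q : ℚ))⁻¹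
            + ((∑ t ∈ S.erase q, ((t - n t % t : ℕ)) • ((t : ℚ))⁻¹) - ((r : ℚ))⁻¹) := by
        have h5 : (m q) • ((q : ℚ))⁻¹ + (∑ u ∈ V.erase q, (m u) • ((u : ℚ))⁻¹) = d := by
          rw [Finset.add_sum_erase V (fun u => (m u) • ((u : ℚ))⁻¹) hqV, ← hdsum]
        have h6 : ((q - n q % q : ℕ)) • ((q : ℚ))⁻¹
            + (∑ t ∈ S.erase q, ((t - n t % t : ℕ)) • ((t : ℚ))⁻¹) = w := by
          rw [hw, Finset.add_sum_erase S (fun t => ((t - n t % t : ℕ)) • ((t : ℚ))⁻¹) hqS]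
        rw [nsmul_eq_mul] at h5 h6
        rw [Int.cast_natCast, Int.cast_natCast]
        linarith
      have hres := residue hq' hX hY heqq
      by_contra hlt
      push_neg at hlt
      have hdvd2 : (q : ℤ) ∣ ((((q - n q % q : ℕ)) : ℤ) - (m q : ℤ)) := by
        have h7 := (dvd_neg (α := ℤ)).mpr hres
        simpa [neg_sub] using h7
      have hpos : 0 < ((((q - n q % q : ℕ)) : ℤ) - (m q : ℤ)) := by
        have h8 : (m q : ℤ) < (((q - n q % q : ℕ)) : ℤ) := by exact_mod_cast hlt
        omega
      have hle := Int.le_of_dvd hpos hdvd2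
      have hmod : n q % q ≠ 0 := (Finset.mem_filter.mp hqS).2
      have hmodlt : n q % q < q := Nat.mod_lt _ hq'.pos
      omega
    have hinsert : insert r S ⊆ V := fun x hx => Finset.mem_union_right _ hx
    have hfin : (∑ u ∈ insert r S, (m u) • ((u : ℚ))⁻¹) ≤ d := by
      rw [hdsum]
      apply Finset.sum_le_sum_of_subset_of_nonneg hinsert
      intro u _ _
      exact nsmul_nonneg (inv_nonneg.mpr (Nat.cast_nonneg u)) _
    have hlow : ((r : ℚ) - 1) * ((r : ℚ))⁻¹ + w ≤ ∑ u ∈ insert r S, (m u) • ((u : ℚ))⁻¹ := by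
      rw [Finset.sum_insert hrS, hw]
      apply add_le_add
      · rw [nsmul_eq_mul]
        apply mul_le_mul_of_nonneg_right _ (inv_nonneg.mpr (Nat.cast_nonneg r))
        have h9 : (r : ℚ) ≤ (m r : ℚ) + 1 := by exact_mod_cast hmr
        linarith
      · apply Finset.sum_le_sum
        intro q hq
        exact nsmul_le_nsmul_left (inv_nonneg.mpr (Nat.cast_nonneg q)) (hmq q hq)
    have hrr : ((r : ℚ)) * ((r : ℚ))⁻¹ = 1 := mul_inv_cancel₀ hr0.ne'
    have hexp : ((r : ℚ) - 1) * ((r : ℚ))⁻¹ = 1 - ((r : ℚ))⁻¹ := by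
      rw [sub_mul, hrr, one_mul]
    have hcontr : ((r : ℚ) - 1) * ((r : ℚ))⁻¹ + w ≤ w - ((r : ℚ))⁻¹ := by
      rw [← hd]
      linarith
    rw [hexp] at hcontr
    have hrpos : (0 : ℚ) < ((r : ℚ))⁻¹ := inv_pos.mpr hr0
    linarith

end RecipPrimes

/-- The additive monoid `M₀ = ⟨1/p : p prime⟩ ⊆ ℚ` is atomic, its atoms are exactly the
reciprocals of primes, and it has no prime elements and no strong atoms. -/
theorem reciprocals_of_primes_monoid (M : AddSubmonoid ℚ)
    (hM : M = AddSubmonoid.closure {q : ℚ | ∃ p : ℕ, Nat.Prime p ∧ q = (p : ℚ)⁻¹}) :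
    AddIsAtomicIn M ∧
    {a : ℚ | AddIsAtomIn M a} = {q : ℚ | ∃ p : ℕ, Nat.Prime p ∧ q = (p : ℚ)⁻¹} ∧
    (∀ p : ℚ, ¬ AddIsPrimeIn M p) ∧
    (∀ a : ℚ, ¬ AddIsStrongAtomIn M a) := by
  subst hM
  refine ⟨RecipPrimes.atomic, ?_, RecipPrimes.no_prime, RecipPrimes.no_strong⟩
  ext a
  constructor
  · intro h
    exact RecipPrimes.atom_gen h
  · rintro ⟨p, hp, rfl⟩
    exact RecipPrimes.gen_atom hp
end

section
/- Let M be the additive submonoid of ℤ³ generated by A = {(1,1,1),(1,-1,1),(-1,1,1),(-1,-1,1)}. Then M is atomic with set of atoms equal to A, every element of A is a strong atom of M, and M has no prime elements. -/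
namespace RankThreeAux

abbrev G3 := ℤ × ℤ × ℤ

def Aset : Set G3 := {(1, 1, 1), (1, -1, 1), (-1, 1, 1), (-1, -1, 1)}

def MA : AddSubmonoid G3 := AddSubmonoid.closure Aset

lemma memP {x : G3} (hx : x ∈ MA) :
    |x.1| ≤ x.2.2 ∧ |x.2.1| ≤ x.2.2 ∧ (x.1 + x.2.2) % 2 = 0 ∧ (x.2.1 + x.2.2) % 2 = 0 := by
  induction hx using AddSubmonoid.closure_induction with
  | mem y hy =>
    rcases hy with h | h | h | h <;> subst h <;> simp
  | zero => simp
  | add y z hy hz ihy ihz =>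
    simp only [Prod.fst_add, Prod.snd_add] at *
    simp only [abs_le] at *
    omega

lemma memSum {x : G3} (hx : x ∈ MA) :
    ∃ s : Multiset G3, (∀ a ∈ s, a ∈ Aset) ∧ s.sum = x := by
  induction hx using AddSubmonoid.closure_induction with
  | mem y hy => exact ⟨{y}, by simpa using hy, by simp⟩
  | zero => exact ⟨0, by simp, by simp⟩
  | add y z hy hz ihy ihz =>
    obtain ⟨s, hs, hsum⟩ := ihy
    obtain ⟨t, ht, htum⟩ := ihz
    refine ⟨s + t, ?_, by simp [hsum, htum]⟩
    intro a ha
    rcases Multiset.mem_add.1 ha with h | h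
    exacts [hs a h, ht a h]

lemma smul_nonneg_mem {n : ℤ} (hn : 0 ≤ n) {g : G3} (hg : g ∈ MA) : n • g ∈ MA := by
  lift n to ℕ using hn
  rw [natCast_zsmul]
  exact AddSubmonoid.nsmul_mem _ hg n

lemma gen_mem {g : G3} (hg : g ∈ Aset) : g ∈ MA := AddSubmonoid.subset_closure hg

lemma mem_of {a b c : ℤ} (h1 : |a| ≤ c) (h2 : |b| ≤ c)
    (h3 : (a + c) % 2 = 0) (h4 : (b + c) % 2 = 0) : ((a, b, c) : G3) ∈ MA := by
  obtain ⟨p, hp⟩ : ∃ p, a + c = 2 * p := ⟨(a + c) / 2, by omega⟩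
  obtain ⟨q, hq⟩ : ∃ q, b + c = 2 * q := ⟨(b + c) / 2, by omega⟩
  rw [abs_le] at h1 h2
  set n1 : ℤ := max 0 (p + q - c) with hn1
  have key : ((a, b, c) : G3) = n1 • (1, 1, 1) + (p - n1) • (1, -1, 1)
      + (q - n1) • (-1, 1, 1) + (c - p - q + n1) • (-1, -1, 1) := by
    simp [Prod.ext_iff]
    constructor
    · omega
    constructor <;> omega
  rw [key]
  have m1 := gen_mem (show ((1:ℤ),(1:ℤ),(1:ℤ)) ∈ Aset by simp [Aset])
  have m2 := gen_mem (show ((1:ℤ),(-1:ℤ),(1:ℤ)) ∈ Aset by simp [Aset])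
  have m3 := gen_mem (show ((-1:ℤ),(1:ℤ),(1:ℤ)) ∈ Aset by simp [Aset])
  have m4 := gen_mem (show ((-1:ℤ),(-1:ℤ),(1:ℤ)) ∈ Aset by simp [Aset])
  exact AddSubmonoid.add_mem _ (AddSubmonoid.add_mem _ (AddSubmonoid.add_mem _
    (smul_nonneg_mem (by omega) m1) (smul_nonneg_mem (by omega) m2))
    (smul_nonneg_mem (by omega) m3)) (smul_nonneg_mem (by omega) m4)

lemma eq_zero_of_third {x : G3} (hx : x ∈ MA) (h : x.2.2 ≤ 0) : x = 0 := by
  obtain ⟨h1, h2, -, -⟩ := memP hx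
  rw [abs_le] at h1 h2
  obtain ⟨a, b, c⟩ := x
  simp only [Prod.mk.injEq, Prod.mk_eq_zero] at *
  refine ⟨by omega, by omega, by omega⟩

lemma unit_iff {x : G3} : AddIsUnitIn MA x ↔ x = 0 := by
  constructor
  · rintro ⟨hx, hnx⟩
    have h1 := (memP hx).1
    have h2 := (memP hnx).1
    simp only [Prod.fst_neg, Prod.snd_neg, abs_neg] at h2
    exact eq_zero_of_third hx (by have := abs_nonneg x.1; omega)
  · rintro rfl
    exact ⟨zero_mem _, by simpa using zero_mem _⟩

lemma third_of_A {a : G3} (ha : a ∈ Aset) : a.2.2 = 1 := by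
  rcases ha with h | h | h | h <;> subst h <;> rfl

lemma fst_of_A {a : G3} (ha : a ∈ Aset) : a.1 = 1 ∨ a.1 = -1 := by
  rcases ha with h | h | h | h <;> subst h <;> simp

lemma snd_of_A {a : G3} (ha : a ∈ Aset) : a.2.1 = 1 ∨ a.2.1 = -1 := by
  rcases ha with h | h | h | h <;> subst h <;> simp

lemma ne_zero_of_A {a : G3} (ha : a ∈ Aset) : a ≠ 0 := by
  intro h
  have := third_of_A ha
  rw [h] at this
  simp at this

lemma atom_of_mem_A {a : G3} (ha : a ∈ Aset) : AddIsAtomIn MA a := by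
  refine ⟨gen_mem ha, by rw [unit_iff]; exact ne_zero_of_A ha, ?_⟩
  intro b c hb hc habc
  have h3 : b.2.2 + c.2.2 = 1 := by
    have : (b + c).2.2 = 1 := habc ▸ third_of_A ha
    simpa using this
  have hb3 := (abs_nonneg b.1).trans (memP hb).1
  have hc3 := (abs_nonneg c.1).trans (memP hc).1
  rcases le_or_gt b.2.2 0 with h | h
  · exact Or.inl (unit_iff.2 (eq_zero_of_third hb h))
  · exact Or.inr (unit_iff.2 (eq_zero_of_third hc (by omega)))

lemma sum_third {s : Multiset G3} (hs : ∀ x ∈ s, x ∈ Aset) :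
    s.sum.2.2 = s.card := by
  induction s using Multiset.induction with
  | empty => simp
  | cons a s ih =>
    simp only [Multiset.sum_cons, Prod.snd_add, Multiset.card_cons]
    rw [third_of_A (hs a (Multiset.mem_cons_self a s)),
      ih (fun x hx => hs x (Multiset.mem_cons_of_mem hx))]
    push_cast
    ring

lemma atoms_eq : {a : G3 | AddIsAtomIn MA a} = Aset := by
  ext a
  simp only [Set.mem_setOf_eq]
  constructor
  · rintro ⟨haM, hanu, hsplit⟩
    obtain ⟨h1, h2, h3, h4⟩ := memP haM
    rw [abs_le] at h1 h2
    obtain ⟨x, y, c⟩ := a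
    simp only at h1 h2 h3 h4
    rcases lt_trichotomy c 1 with hc | hc | hc
    · exact (hanu (unit_iff.2 (eq_zero_of_third haM (by simp only; omega)))).elim
    · have hx : x = 1 ∨ x = -1 := by omega
      have hy : y = 1 ∨ y = -1 := by omega
      rcases hx with rfl | rfl <;> rcases hy with rfl | rfl <;>
        simp [Aset, hc.symm, Prod.ext_iff]
    · exfalso
      obtain ⟨s, hsA, hsum⟩ := memSum haM
      have hcard : (s.card : ℤ) = c := by
        have := sum_third hsA
        rw [hsum] at this
        exact this.symm
      have hpos : s ≠ 0 := by
        intro h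
        rw [h] at hcard
        simp at hcard
        omega
      obtain ⟨g, hg⟩ := Multiset.exists_mem_of_ne_zero hpos
      have herase : g + (s.erase g).sum = ((x, y, c) : G3) := by
        rw [← hsum, ← Multiset.sum_cons, Multiset.cons_erase hg]
      have hgM : g ∈ MA := gen_mem (hsA g hg)
      have heM : (s.erase g).sum ∈ MA :=
        AddSubmonoid.multiset_sum_mem _ _ (fun x hx =>
          gen_mem (hsA x (Multiset.mem_of_mem_erase hx)))
      rcases hsplit g (s.erase g).sum hgM heM herase.symm with hu | hu
      · exact ne_zero_of_A (hsA g hg) (unit_iff.1 hu)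
      · have h3' := sum_third (s := s.erase g) (fun x hx => hsA x (Multiset.mem_of_mem_erase hx))
        have hcard' : ((s.erase g).card : ℤ) = c - 1 := by
          have h5 := Multiset.card_erase_of_mem hg
          rw [Nat.pred_eq_sub_one] at h5
          have hpos' : 0 < Multiset.card s := Multiset.card_pos.2 hpos
          omega
        have := unit_iff.1 hu
        rw [this] at h3'
        simp at h3'
        omega
  · exact atom_of_mem_A

lemma all_eq_sign {t : Multiset ℤ} {e : ℤ} (he : e = 1 ∨ e = -1)
    (ht : ∀ x ∈ t, x = 1 ∨ x = -1) (hsum : t.sum = e * t.card) :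
    ∀ x ∈ t, x = e := by
  have habs : ∀ u : Multiset ℤ, (∀ x ∈ u, x = 1 ∨ x = -1) → |u.sum| ≤ u.card := by
    intro u hu
    induction u using Multiset.induction with
    | empty => simp
    | cons a u ih =>
      simp only [Multiset.sum_cons, Multiset.card_cons]
      have ha := hu a (Multiset.mem_cons_self a u)
      have h2 := ih (fun x hx => hu x (Multiset.mem_cons_of_mem hx))
      rw [abs_le] at *
      push_cast
      omega
  induction t using Multiset.induction with
  | empty => simp
  | cons a t ih =>
    have ha := ht a (Multiset.mem_cons_self a t)
    have ht' : ∀ x ∈ t, x = 1 ∨ x = -1 := fun x hx => ht x (Multiset.mem_cons_of_mem hx)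
    have habs' := habs t ht'
    simp only [Multiset.sum_cons, Multiset.card_cons] at hsum
    have hae : a = e ∧ t.sum = e * t.card := by
      rw [abs_le] at habs'
      push_cast at hsum
      rcases he with rfl | rfl <;> rcases ha with rfl | rfl <;>
        constructor <;> omega
    intro x hx
    rcases Multiset.mem_cons.1 hx with rfl | hx
    · exact hae.1
    · exact ih ht' hae.2 x hx

lemma sum_fst (s : Multiset G3) : (s.map Prod.fst).sum = s.sum.1 := by
  induction s using Multiset.induction with
  | empty => simp
  | cons a s ih => simp [ih]

lemma sum_snd (s : Multiset G3) : (s.map (fun x => x.2.1)).sum = s.sum.2.1 := by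
  induction s using Multiset.induction with
  | empty => simp
  | cons a s ih => simp [ih]

lemma strong_of_mem_A {a : G3} (ha : a ∈ Aset) : AddIsStrongAtomIn MA a := by
  refine ⟨atom_of_mem_A ha, ?_⟩
  intro n hn s hs hsum
  have hsA : ∀ x ∈ s, x ∈ Aset := by
    intro x hx
    have := hs x hx
    rw [← atoms_eq]
    exact this
  obtain ⟨e1, e2, e3⟩ := a
  have he3 : e3 = 1 := third_of_A ha
  subst he3
  have he1 : e1 = 1 ∨ e1 = -1 := fst_of_A ha
  have he2 : e2 = 1 ∨ e2 = -1 := snd_of_A ha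
  have hsmul : (n : ℤ) • ((e1, e2, 1) : G3) = ((n * e1, n * e2, n) : G3) := by
    simp [Prod.ext_iff, mul_comm]
  have hsum' : s.sum = ((n * e1, n * e2, (n : ℤ)) : G3) := by
    rw [hsum, ← hsmul, natCast_zsmul]
  have hcard : (s.card : ℤ) = n := by
    have := sum_third hsA
    rw [hsum'] at this
    exact this.symm
  have hf1 := sum_fst s
  have hf2 := sum_snd s
  have h1 : ∀ x ∈ s, x.1 = e1 := by
    intro x hx
    refine all_eq_sign (t := s.map Prod.fst) he1 ?_ ?_ x.1 (Multiset.mem_map.2 ⟨x, hx, rfl⟩)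
    · intro y hy
      obtain ⟨z, hz, rfl⟩ := Multiset.mem_map.1 hy
      exact fst_of_A (hsA z hz)
    · rw [hf1, hsum', Multiset.card_map]
      simp [hcard, mul_comm]
  have h2 : ∀ x ∈ s, x.2.1 = e2 := by
    intro x hx
    refine all_eq_sign (t := s.map (fun z => z.2.1)) he2 ?_ ?_ x.2.1 (Multiset.mem_map.2 ⟨x, hx, rfl⟩)
    · intro y hy
      obtain ⟨z, hz, rfl⟩ := Multiset.mem_map.1 hy
      exact snd_of_A (hsA z hz)
    · rw [hf2, hsum', Multiset.card_map]
      simp [hcard, mul_comm]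
  rw [Multiset.eq_replicate]
  refine ⟨by exact_mod_cast hcard, ?_⟩
  intro b hb
  have := third_of_A (hsA b hb)
  obtain ⟨b1, b2, b3⟩ := b
  simp only at this
  simp only [Prod.mk.injEq]
  exact ⟨h1 _ hb, h2 _ hb, this⟩

lemma no_primes (p : G3) : ¬ AddIsPrimeIn MA p := by
  rintro ⟨hp, hnu, hdvd⟩
  obtain ⟨a, b, c⟩ := p
  obtain ⟨h1, h2, h3, h4⟩ := memP hp
  simp only at h1 h2 h3 h4
  have hc : 1 ≤ c := by
    rcases lt_or_ge c 1 with h | h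
    · exact (hnu (unit_iff.2 (eq_zero_of_third hp (by simp only; omega)))).elim
    · exact h
  rw [abs_le] at h1 h2
  set k : ℤ := c + 1 with hk
  have kb : ∀ u v : ℤ, u = 1 ∨ u = -1 → v = 1 ∨ v = -1 →
      (∃ d ∈ MA, ((u * k, v * k, k) : G3) = (a, b, c) + d) → a = u * c ∧ b = v * c := by
    rintro u v hu hv ⟨d, hd, heq⟩
    obtain ⟨d1, d2, d3⟩ := d
    obtain ⟨g1, g2, -, -⟩ := memP hd
    simp only at g1 g2
    rw [abs_le] at g1 g2
    simp only [Prod.mk_add_mk, Prod.mk.injEq] at heq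
    rcases hu with rfl | rfl <;> rcases hv with rfl | rfl <;>
      constructor <;> omega
  have hgen : ∀ u v : ℤ, u = 1 ∨ u = -1 → v = 1 ∨ v = -1 →
      ((u * k, v * k, k) : G3) ∈ MA := by
    rintro u v (rfl | rfl) (rfl | rfl) <;>
      exact mem_of (by rw [abs_le]; omega) (by rw [abs_le]; omega) (by omega) (by omega)
  have hdmem : ((-a, -b, 2 * k - c) : G3) ∈ MA :=
    mem_of (by rw [abs_le]; omega) (by rw [abs_le]; omega) (by omega) (by omega)
  have r1 := hdvd (1 * k, 1 * k, k) (-1 * k, -1 * k, k)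
    (hgen 1 1 (Or.inl rfl) (Or.inl rfl)) (hgen (-1) (-1) (Or.inr rfl) (Or.inr rfl))
    ⟨(-a, -b, 2 * k - c), hdmem, by
      simp only [Prod.mk_add_mk, Prod.mk.injEq]; refine ⟨by ring, by ring, by ring⟩⟩
  have r2 := hdvd (1 * k, -1 * k, k) (-1 * k, 1 * k, k)
    (hgen 1 (-1) (Or.inl rfl) (Or.inr rfl)) (hgen (-1) 1 (Or.inr rfl) (Or.inl rfl))
    ⟨(-a, -b, 2 * k - c), hdmem, by
      simp only [Prod.mk_add_mk, Prod.mk.injEq]; refine ⟨by ring, by ring, by ring⟩⟩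
  have e1 : (a = 1 * c ∧ b = 1 * c) ∨ (a = -1 * c ∧ b = -1 * c) := by
    rcases r1 with h | h
    · exact Or.inl (kb 1 1 (Or.inl rfl) (Or.inl rfl) h)
    · exact Or.inr (kb (-1) (-1) (Or.inr rfl) (Or.inr rfl) h)
  have e2 : (a = 1 * c ∧ b = -1 * c) ∨ (a = -1 * c ∧ b = 1 * c) := by
    rcases r2 with h | h
    · exact Or.inl (kb 1 (-1) (Or.inl rfl) (Or.inr rfl) h)
    · exact Or.inr (kb (-1) 1 (Or.inr rfl) (Or.inl rfl) h)
  omega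

end RankThreeAux

/-- The additive submonoid of `ℤ³` generated by `{(±1,±1,1)}` is atomic, its atoms are exactly
these four generators, each of which is a strong atom, and it has no prime elements. -/
theorem rank_three_monoid_strong_atoms_no_primes
    (A : Set (ℤ × ℤ × ℤ))
    (hA : A = {(1, 1, 1), (1, -1, 1), (-1, 1, 1), (-1, -1, 1)})
    (M : AddSubmonoid (ℤ × ℤ × ℤ)) (hM : M = AddSubmonoid.closure A) :
    AddIsAtomicIn M ∧
    {a : ℤ × ℤ × ℤ | AddIsAtomIn M a} = A ∧
    (∀ a ∈ A, AddIsStrongAtomIn M a) ∧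
    (∀ p : ℤ × ℤ × ℤ, ¬ AddIsPrimeIn M p) := by
  have hMA : M = RankThreeAux.MA := by rw [hM, hA]; rfl
  subst hMA
  subst hA
  refine ⟨?_, RankThreeAux.atoms_eq, ?_, RankThreeAux.no_primes⟩
  · intro x hx hnu
    obtain ⟨s, hsA, hsum⟩ := RankThreeAux.memSum hx
    exact ⟨s, fun a ha => RankThreeAux.atom_of_mem_A (hsA a ha), hsum⟩
  · intro a ha
    exact RankThreeAux.strong_of_mem_A ha
end

section
/- Let M be the additive submonoid of ℤ² generated by a₀ = (0,2), a₁ = (1,1), a₂ = (2,0). Then the set of atoms of M is {a₀,a₁,a₂}, the set of strong atoms of M is {a₀,a₂}, and M has no primes. -/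
section Helpers

lemma RankTwo.mem_iff (M : AddSubmonoid (ℤ × ℤ))
    (hM : M = AddSubmonoid.closure {((0 : ℤ), (2 : ℤ)), (1, 1), (2, 0)}) (x : ℤ × ℤ) :
    x ∈ M ↔ 0 ≤ x.1 ∧ 0 ≤ x.2 ∧ 2 ∣ x.1 + x.2 := by
  constructor
  · intro hx
    rw [hM] at hx
    induction hx using AddSubmonoid.closure_induction with
    | mem y hy => rcases hy with h|h|h <;> subst h <;> refine ⟨by norm_num, by norm_num, by norm_num⟩
    | zero => exact ⟨le_refl 0, le_refl 0, by norm_num⟩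
    | add a b ha hb iha ihb =>
      exact ⟨by simpa using add_nonneg iha.1 ihb.1, by simpa using add_nonneg iha.2.1 ihb.2.1,
        by obtain ⟨_,_,h1⟩ := iha; obtain ⟨_,_,h2⟩ := ihb;
           simp only [Prod.fst_add, Prod.snd_add]; omega⟩
  · rintro ⟨h1, h2, h3⟩
    have key : ∀ (a b c : ℕ), ((b : ℤ) + 2*c, 2*(a:ℤ) + b) ∈ M := by
      intro a b c
      have g0 : ((0 : ℤ), (2:ℤ)) ∈ M := hM ▸ AddSubmonoid.subset_closure (by simp)
      have g1 : ((1 : ℤ), (1:ℤ)) ∈ M := hM ▸ AddSubmonoid.subset_closure (by simp)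
      have g2 : ((2 : ℤ), (0:ℤ)) ∈ M := hM ▸ AddSubmonoid.subset_closure (by simp)
      have := M.add_mem (M.add_mem (M.nsmul_mem g0 a) (M.nsmul_mem g1 b)) (M.nsmul_mem g2 c)
      convert this using 2 <;> simp [Prod.ext_iff] <;> ring
    rcases Int.even_or_odd x.1 with ⟨k, hk⟩ | ⟨k, hk⟩
    · obtain ⟨c, hc⟩ : ∃ c : ℕ, x.1 = 2 * c := ⟨x.1.toNat / 2, by omega⟩
      obtain ⟨a, ha⟩ : ∃ a : ℕ, x.2 = 2 * a := ⟨x.2.toNat / 2, by omega⟩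
      have hx : x = ((0:ℕ) + 2*(c:ℤ), 2*(a:ℤ) + (0:ℕ)) := by ext <;> simp <;> omega
      rw [hx]; exact key a 0 c
    · obtain ⟨c, hc⟩ : ∃ c : ℕ, x.1 = 1 + 2 * c := ⟨x.1.toNat / 2, by omega⟩
      obtain ⟨a, ha⟩ : ∃ a : ℕ, x.2 = 2 * a + 1 := ⟨x.2.toNat / 2, by omega⟩
      have hx : x = ((1:ℕ) + 2*(c:ℤ), 2*(a:ℤ) + (1:ℕ)) := by ext <;> simp <;> omega
      rw [hx]; exact key a 1 c

variable (M : AddSubmonoid (ℤ × ℤ))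
  (hmem : ∀ x : ℤ × ℤ, x ∈ M ↔ 0 ≤ x.1 ∧ 0 ≤ x.2 ∧ 2 ∣ x.1 + x.2)

include hmem

lemma RankTwo.unit_iff (x : ℤ × ℤ) : AddIsUnitIn M x ↔ x = 0 := by
  constructor
  · rintro ⟨h1, h2⟩
    rw [hmem] at h1 h2
    simp only [Prod.fst_neg, Prod.snd_neg] at h2
    have : x.1 = 0 ∧ x.2 = 0 := by omega
    ext <;> simp [this.1, this.2]
  · rintro rfl
    exact ⟨M.zero_mem, by simpa using M.zero_mem⟩

lemma RankTwo.atom_iff (x : ℤ × ℤ) :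
    AddIsAtomIn M x ↔ (x = (0, 2) ∨ x = (1, 1) ∨ x = (2, 0)) := by
  constructor
  · rintro ⟨hx, hnu, hd⟩
    rw [hmem] at hx
    rw [RankTwo.unit_iff M hmem] at hnu
    obtain ⟨h1, h2, h3⟩ := hx
    have hne : x.1 + x.2 ≠ 0 := by
      intro h
      apply hnu
      have : x.1 = 0 ∧ x.2 = 0 := by omega
      ext <;> simp [this.1, this.2]
    by_cases hs : x.1 + x.2 = 2
    · simp only [Prod.ext_iff]
      omega
    · exfalso
      rcases le_or_gt 2 x.1 with hx1 | hx1
      · have hb : ((2:ℤ), (0:ℤ)) ∈ M := by rw [hmem]; norm_num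
        have hc : (x.1 - 2, x.2) ∈ M := by
          rw [hmem]; refine ⟨by omega, by omega, by omega⟩
        rcases hd _ _ hb hc (by ext <;> simp) with h | h <;>
          rw [RankTwo.unit_iff M hmem] at h <;> rw [Prod.ext_iff] at h <;> simp at h <;> omega
      · have hx2 : 2 ≤ x.2 := by omega
        have hb : ((0:ℤ), (2:ℤ)) ∈ M := by rw [hmem]; norm_num
        have hc : (x.1, x.2 - 2) ∈ M := by
          rw [hmem]; refine ⟨by omega, by omega, by omega⟩
        rcases hd _ _ hb hc (by ext <;> simp) with h | h <;>
          rw [RankTwo.unit_iff M hmem] at h <;> rw [Prod.ext_iff] at h <;> simp at h <;> omega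
  · intro h
    have hsum : x.1 + x.2 = 2 ∧ 0 ≤ x.1 ∧ 0 ≤ x.2 := by
      rcases h with rfl | rfl | rfl <;> norm_num
    refine ⟨by rw [hmem]; exact ⟨hsum.2.1, hsum.2.2, by omega⟩, ?_, ?_⟩
    · rw [RankTwo.unit_iff M hmem]
      intro h0
      rw [h0] at hsum
      simp at hsum
    · intro b c hb hc heq
      rw [hmem] at hb hc
      rw [RankTwo.unit_iff M hmem, RankTwo.unit_iff M hmem]
      have h1 : x.1 = b.1 + c.1 := by rw [heq]; simp
      have h2 : x.2 = b.2 + c.2 := by rw [heq]; simp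
      obtain ⟨hb1, hb2, hb3⟩ := hb
      obtain ⟨hc1, hc2, hc3⟩ := hc
      have : (b.1 = 0 ∧ b.2 = 0) ∨ (c.1 = 0 ∧ c.2 = 0) := by omega
      rcases this with ⟨e1, e2⟩ | ⟨e1, e2⟩
      · left; ext <;> simp [e1, e2]
      · right; ext <;> simp [e1, e2]
end Helpers

lemma RankTwo.sum_fst (s : Multiset (ℤ × ℤ)) : s.sum.1 = (s.map Prod.fst).sum := by
  induction s using Multiset.induction with
  | empty => simp
  | cons a t ih => simp [ih]

lemma RankTwo.sum_snd (s : Multiset (ℤ × ℤ)) : s.sum.2 = (s.map Prod.snd).sum := by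
  induction s using Multiset.induction with
  | empty => simp
  | cons a t ih => simp [ih]

/-- For the additive submonoid of `ℤ²` generated by `a₀ = (0,2)`, `a₁ = (1,1)`, `a₂ = (2,0)`,
the set of atoms is `{a₀, a₁, a₂}`, the set of strong atoms is `{a₀, a₂}`, and there are
no prime elements. -/
theorem rank_two_monoid_atoms_strong_atoms_primes
    (M : AddSubmonoid (ℤ × ℤ))
    (hM : M = AddSubmonoid.closure {((0 : ℤ), (2 : ℤ)), (1, 1), (2, 0)}) :
    {a : ℤ × ℤ | AddIsAtomIn M a} = {((0 : ℤ), (2 : ℤ)), (1, 1), (2, 0)} ∧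
    {a : ℤ × ℤ | AddIsStrongAtomIn M a} = {((0 : ℤ), (2 : ℤ)), (2, 0)} ∧
    (∀ p : ℤ × ℤ, ¬ AddIsPrimeIn M p) := by
  have hmem := RankTwo.mem_iff M hM
  have hunit := RankTwo.unit_iff M hmem
  have hatom := RankTwo.atom_iff M hmem
  -- key facts about multisets of atoms
  have sum2 : ∀ s : Multiset (ℤ × ℤ), (∀ b ∈ s, AddIsAtomIn M b) →
      s.sum.1 + s.sum.2 = 2 * s.card := by
    intro s hs
    induction s using Multiset.induction with
    | empty => simp
    | cons a t ih =>
      have ha := (hatom a).mp (hs a (Multiset.mem_cons_self a t))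
      have ht := ih (fun b hb => hs b (Multiset.mem_cons_of_mem hb))
      have : a.1 + a.2 = 2 := by rcases ha with rfl | rfl | rfl <;> norm_num
      simp only [Multiset.sum_cons, Prod.fst_add, Prod.snd_add, Multiset.card_cons]
      push_cast
      omega
  have fst_nonneg : ∀ s : Multiset (ℤ × ℤ), (∀ b ∈ s, AddIsAtomIn M b) → 0 ≤ s.sum.1 := by
    intro s hs
    induction s using Multiset.induction with
    | empty => simp
    | cons a t ih =>
      have ha := (hatom a).mp (hs a (Multiset.mem_cons_self a t))
      have ht := ih (fun b hb => hs b (Multiset.mem_cons_of_mem hb))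
      have : 0 ≤ a.1 := by rcases ha with rfl | rfl | rfl <;> norm_num
      simp only [Multiset.sum_cons, Prod.fst_add]
      omega
  have snd_nonneg : ∀ s : Multiset (ℤ × ℤ), (∀ b ∈ s, AddIsAtomIn M b) → 0 ≤ s.sum.2 := by
    intro s hs
    induction s using Multiset.induction with
    | empty => simp
    | cons a t ih =>
      have ha := (hatom a).mp (hs a (Multiset.mem_cons_self a t))
      have ht := ih (fun b hb => hs b (Multiset.mem_cons_of_mem hb))
      have : 0 ≤ a.2 := by rcases ha with rfl | rfl | rfl <;> norm_num
      simp only [Multiset.sum_cons, Prod.snd_add]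
      omega
  refine ⟨?_, ?_, ?_⟩
  · ext x
    simp only [Set.mem_setOf_eq, Set.mem_insert_iff, Set.mem_singleton_iff]
    exact hatom x
  · ext x
    simp only [Set.mem_setOf_eq, Set.mem_insert_iff, Set.mem_singleton_iff]
    constructor
    · rintro ⟨ha, hstrong⟩
      rcases (hatom x).mp ha with rfl | rfl | rfl
      · left; rfl
      · -- (1,1) is not a strong atom
        exfalso
        have hs : ∀ b ∈ ({((0:ℤ),(2:ℤ)), ((2:ℤ),(0:ℤ))} : Multiset (ℤ × ℤ)),
            AddIsAtomIn M b := by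
          intro b hb
          rw [hatom]
          rcases Multiset.mem_cons.mp hb with rfl | hb
          · left; rfl
          · right; right; simpa using hb
        have hsum : ({((0:ℤ),(2:ℤ)), ((2:ℤ),(0:ℤ))} : Multiset (ℤ × ℤ)).sum
            = (2 : ℕ) • ((1:ℤ),(1:ℤ)) := by
          simp [Prod.ext_iff]
        have := hstrong 2 (by norm_num) _ hs hsum
        have h02 : ((0:ℤ),(2:ℤ)) ∈ ({((0:ℤ),(2:ℤ)), ((2:ℤ),(0:ℤ))} : Multiset (ℤ × ℤ)) :=
          Multiset.mem_cons_self _ _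
        rw [this] at h02
        have := Multiset.eq_of_mem_replicate h02
        simp [Prod.ext_iff] at this
      · right; rfl
    · intro hx
      have main : ∀ v : ℤ × ℤ, (v = ((0:ℤ),(2:ℤ)) ∨ v = ((2:ℤ),(0:ℤ))) →
          AddIsStrongAtomIn M v := by
        rintro v hv
        have hva : AddIsAtomIn M v := by
          rw [hatom]; rcases hv with rfl | rfl
          · left; rfl
          · right; right; rfl
        refine ⟨hva, ?_⟩
        intro n hn s hs hsum
        have hall : ∀ b ∈ s, b = v := by
          intro b hb
          by_contra hne
          have hbv := (hatom b).mp (hs b hb)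
          have hsplit : b + (s.erase b).sum = s.sum := by
            rw [← Multiset.sum_cons, s.cons_erase hb]
          rcases hv with rfl | rfl
          · have hpos : 0 < b.1 := by
              rcases hbv with rfl | rfl | rfl
              · exact absurd rfl hne
              · norm_num
              · norm_num
            have h1 : b.1 + (s.erase b).sum.1 = 0 := by
              have := congrArg Prod.fst (hsplit.trans hsum)
              simpa using this
            have h2 : 0 ≤ (s.erase b).sum.1 :=
              fst_nonneg _ (fun c hc => hs c (Multiset.mem_of_mem_erase hc))
            omega
          · have hpos : 0 < b.2 := by
              rcases hbv with rfl | rfl | rfl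
              · norm_num
              · norm_num
              · exact absurd rfl hne
            have h1 : b.2 + (s.erase b).sum.2 = 0 := by
              have := congrArg Prod.snd (hsplit.trans hsum)
              simpa using this
            have h2 : 0 ≤ (s.erase b).sum.2 :=
              snd_nonneg _ (fun c hc => hs c (Multiset.mem_of_mem_erase hc))
            omega
        rw [Multiset.eq_replicate_card.mpr hall]
        congr 1
        have hc := sum2 s hs
        have h1 : s.sum.1 + s.sum.2 = 2 * n := by
          rcases hv with rfl | rfl <;>
            rw [hsum, Prod.smul_fst, Prod.smul_snd, nsmul_eq_mul, nsmul_eq_mul] <;> omega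
        omega
      rcases hx with rfl | rfl
      · exact main _ (Or.inl rfl)
      · exact main _ (Or.inr rfl)
  · rintro p ⟨hp, hnu, hprime⟩
    rw [hmem] at hp
    rw [hunit] at hnu
    obtain ⟨h1, h2, h3⟩ := hp
    have hne : p.1 + p.2 ≠ 0 := by
      intro h
      apply hnu
      have : p.1 = 0 ∧ p.2 = 0 := by omega
      ext <;> simp [this.1, this.2]
    rcases lt_or_ge 0 p.1 with hp1 | hp1
    · rcases lt_or_ge 0 p.2 with hp2 | hp2
      · -- both positive: b = (p.1+p.2, 0), c = (0, p.1+p.2)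
        have hb : ((p.1 + p.2 : ℤ), (0:ℤ)) ∈ M := by
          rw [hmem]; refine ⟨by omega, le_refl 0, by omega⟩
        have hc : ((0:ℤ), (p.1 + p.2 : ℤ)) ∈ M := by
          rw [hmem]; refine ⟨le_refl 0, by omega, by omega⟩
        have hd : ((p.2 : ℤ), (p.1 : ℤ)) ∈ M := by
          rw [hmem]; refine ⟨by omega, by omega, by omega⟩
        rcases hprime _ _ hb hc ⟨_, hd, by ext <;> simp <;> ring⟩ with ⟨d, hdM, hde⟩ | ⟨d, hdM, hde⟩ <;>
          rw [hmem] at hdM <;> rw [Prod.ext_iff] at hde <;>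
          simp only [Prod.fst_add, Prod.snd_add] at hde <;> omega
      · -- p = (p.1, 0), p.1 ≥ 2 even: b = (p.1 - 1, 1), c = (1,1)
        have hp2' : p.2 = 0 := by omega
        have hb : ((p.1 - 1 : ℤ), (1:ℤ)) ∈ M := by
          rw [hmem]; refine ⟨by omega, by omega, by omega⟩
        have hc : ((1:ℤ), (1:ℤ)) ∈ M := by rw [hmem]; norm_num
        have hd : ((0:ℤ), (2:ℤ)) ∈ M := by rw [hmem]; norm_num
        rcases hprime _ _ hb hc ⟨_, hd, by ext <;> simp <;> omega⟩ with ⟨d, hdM, hde⟩ | ⟨d, hdM, hde⟩ <;>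
          rw [hmem] at hdM <;> rw [Prod.ext_iff] at hde <;>
          simp only [Prod.fst_add, Prod.snd_add] at hde <;> omega
    · -- p = (0, p.2), p.2 ≥ 2: b = (1, p.2 - 1), c = (1,1)
      have hp1' : p.1 = 0 := by omega
      have hb : ((1:ℤ), (p.2 - 1 : ℤ)) ∈ M := by
        rw [hmem]; refine ⟨by omega, by omega, by omega⟩
      have hc : ((1:ℤ), (1:ℤ)) ∈ M := by rw [hmem]; norm_num
      have hd : ((2:ℤ), (0:ℤ)) ∈ M := by rw [hmem]; norm_num
      rcases hprime _ _ hb hc ⟨_, hd, by ext <;> simp <;> omega⟩ with ⟨d, hdM, hde⟩ | ⟨d, hdM, hde⟩ <;>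
        rw [hmem] at hdM <;> rw [Prod.ext_iff] at hde <;>
        simp only [Prod.fst_add, Prod.snd_add] at hde <;> omega
end

section
/- Let M be a reduced atomic additive submonoid of ℤ^d and let C = cone_ℚ(M) be the conic hull of M in ℚ^d. Then an element a ∈ M \ {0} is a strong atom of M if and only if ℚ_{≥0}·a is a one-dimensional face of C and M ∩ ℚ_{≥0}·a = ℕ₀·a. -/
/-- Componentwise coercion of an integer vector to a rational vector. -/
def coeZQ {d : ℕ} (v : Fin d → ℤ) : Fin d → ℚ := fun i => (v i : ℚ)

/-- The conic hull of a set `S ⊆ ℚ^d`: all finite nonnegative rational combinations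
of elements of `S`. -/
def conicHullQ {d : ℕ} (S : Set (Fin d → ℚ)) : Set (Fin d → ℚ) :=
  {y | ∃ (n : ℕ) (c : Fin n → ℚ) (v : Fin n → Fin d → ℚ),
    (∀ i, 0 ≤ c i ∧ v i ∈ S) ∧ y = ∑ i, c i • v i}

/-- A (convex) cone in `ℚ^d`: a nonempty set closed under nonnegative combinations. -/
def IsConvexConeQ {d : ℕ} (C : Set (Fin d → ℚ)) : Prop :=
  C.Nonempty ∧ ∀ x ∈ C, ∀ y ∈ C, ∀ a b : ℚ, 0 ≤ a → 0 ≤ b → a • x + b • y ∈ C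

/-- `F` is a face of the cone `C`: a subcone such that whenever an open segment between
two points of `C` meets `F`, both endpoints lie in `F`. -/
def IsFaceOfQ {d : ℕ} (C F : Set (Fin d → ℚ)) : Prop :=
  F ⊆ C ∧ IsConvexConeQ F ∧
    ∀ x ∈ C, ∀ y ∈ C, (∃ t : ℚ, 0 < t ∧ t < 1 ∧ t • x + (1 - t) • y ∈ F) → x ∈ F ∧ y ∈ F


namespace SAaux
variable {d : ℕ}

lemma coeZQ_add (v w : Fin d → ℤ) : coeZQ (v + w) = coeZQ v + coeZQ w := by
  funext i; simp [coeZQ]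

lemma coeZQ_zero : coeZQ (0 : Fin d → ℤ) = 0 := by funext i; simp [coeZQ]

lemma coeZQ_nsmul (n : ℕ) (v : Fin d → ℤ) : coeZQ (n • v) = (n : ℚ) • coeZQ v := by
  funext i; simp [coeZQ, mul_comm]

lemma coeZQ_inj : Function.Injective (coeZQ (d := d)) := by
  intro v w h
  funext i
  have := congrFun h i
  simpa [coeZQ] using this

lemma coeZQ_sum {n : ℕ} (f : Fin n → Fin d → ℤ) :
    coeZQ (∑ i, f i) = ∑ i, coeZQ (f i) := by
  funext j
  simp [coeZQ, Finset.sum_apply]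

lemma coeZQ_msum (s : Multiset (Fin d → ℤ)) :
    coeZQ s.sum = (s.map coeZQ).sum := by
  induction s using Multiset.induction with
  | empty => simp [coeZQ_zero]
  | cons b t ih => simp [coeZQ_add, ih]

lemma nsmul_cancel {a : Fin d → ℤ} (ha : a ≠ 0) {n m : ℕ} (h : n • a = m • a) : n = m := by
  obtain ⟨i, hi⟩ := Function.ne_iff.mp ha
  have hi' : a i ≠ 0 := by simpa using hi
  have := congrFun h i
  simp only [Pi.smul_apply, smul_eq_mul, nsmul_eq_mul] at this
  exact_mod_cast mul_right_cancel₀ hi' this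

lemma nsmul_eq_zero' {x : Fin d → ℤ} {n : ℕ} (hn : n ≠ 0) (h : n • x = 0) : x = 0 := by
  funext i
  have := congrFun h i
  simp only [Pi.smul_apply, smul_eq_mul, nsmul_eq_mul, Pi.zero_apply] at this
  rcases mul_eq_zero.mp this with h' | h'
  · exact absurd (by exact_mod_cast h') hn
  · exact h'

lemma exists_nat_mul (r : ℚ) (hr : 0 ≤ r) (D : ℕ) (h : r.den ∣ D) :
    ∃ k : ℕ, (k : ℚ) = r * D := by
  obtain ⟨c, hc⟩ := h
  refine ⟨r.num.toNat * c, ?_⟩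
  have hnum : (0:ℤ) ≤ r.num := Rat.num_nonneg.mpr hr
  have h0 : ((r.num.toNat : ℕ) : ℚ) = (r.num : ℚ) := by
    exact_mod_cast Int.toNat_of_nonneg hnum
  have h1 : ((r.num.toNat * c : ℕ) : ℚ) = (r.num : ℚ) * c := by
    push_cast; rw [h0]
  rw [h1, hc, ← Rat.mul_den_eq_num]
  push_cast
  ring

lemma smul_mem_hull {S : Set (Fin d → ℚ)} {x : Fin d → ℚ} (hx : x ∈ conicHullQ S)
    {c : ℚ} (hc : 0 ≤ c) : c • x ∈ conicHullQ S := by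
  obtain ⟨n, e, v, h, rfl⟩ := hx
  exact ⟨n, fun i => c * e i, v, fun i => ⟨mul_nonneg hc (h i).1, (h i).2⟩, by
    rw [Finset.smul_sum]; simp [smul_smul]⟩

lemma add_mem_hull {S : Set (Fin d → ℚ)} {x y : Fin d → ℚ} (hx : x ∈ conicHullQ S)
    (hy : y ∈ conicHullQ S) : x + y ∈ conicHullQ S := by
  obtain ⟨n, e, v, h, rfl⟩ := hx
  obtain ⟨m, f, w, h', rfl⟩ := hy
  refine ⟨n + m, Fin.append e f, Fin.append v w, ?_, ?_⟩
  · intro i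
    refine Fin.addCases (fun j => ?_) (fun j => ?_) i
    · simpa [Fin.append_left] using h j
    · simpa [Fin.append_right] using h' j
  · rw [Fin.sum_univ_add]
    simp [Fin.append_left, Fin.append_right]

lemma zero_mem_hull {S : Set (Fin d → ℚ)} : (0 : Fin d → ℚ) ∈ conicHullQ S :=
  ⟨0, Fin.elim0, Fin.elim0, fun i => i.elim0, by simp⟩

lemma mem_of_add_mem_face {C F : Set (Fin d → ℚ)}
    (hC : ∀ x ∈ C, ∀ c : ℚ, 0 ≤ c → c • x ∈ C) (hF : IsFaceOfQ C F)
    {x y : Fin d → ℚ} (hx : x ∈ C) (hy : y ∈ C) (hxy : x + y ∈ F) : x ∈ F ∧ y ∈ F := by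
  have h2x : (2:ℚ) • x ∈ C := hC x hx 2 (by norm_num)
  have h2y : (2:ℚ) • y ∈ C := hC y hy 2 (by norm_num)
  have key := hF.2.2 _ h2x _ h2y ⟨1/2, by norm_num, by norm_num, by
    have : (1/2 : ℚ) • ((2:ℚ) • x) + (1 - 1/2 : ℚ) • ((2:ℚ) • y) = x + y := by
      rw [smul_smul, smul_smul]; norm_num
    rwa [this]⟩
  constructor
  · have := hF.2.1.2 _ key.1 _ key.1 (1/2) 0 (by norm_num) le_rfl
    simpa [smul_smul] using this
  · have := hF.2.1.2 _ key.2 _ key.2 (1/2) 0 (by norm_num) le_rfl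
    simpa [smul_smul] using this

lemma multiset_mem_face {C F : Set (Fin d → ℚ)}
    (hC0 : (0:Fin d → ℚ) ∈ C)
    (hCadd : ∀ x ∈ C, ∀ y ∈ C, x + y ∈ C)
    (hCsmul : ∀ x ∈ C, ∀ c : ℚ, 0 ≤ c → c • x ∈ C)
    (hF : IsFaceOfQ C F) :
    ∀ t : Multiset (Fin d → ℚ), (∀ z ∈ t, z ∈ C) → t.sum ∈ F → ∀ z ∈ t, z ∈ F := by
  intro t
  induction t using Multiset.induction with
  | empty => intro _ _ z hz; simp at hz
  | cons b s ih =>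
    intro hall hsum z hz
    have hsC : s.sum ∈ C := by
      have main : ∀ u : Multiset (Fin d → ℚ), (∀ z ∈ u, z ∈ C) → u.sum ∈ C := by
        intro u
        induction u using Multiset.induction with
        | empty => simp [hC0]
        | cons c v ihv =>
          intro h
          rw [Multiset.sum_cons]
          exact hCadd _ (h c (Multiset.mem_cons_self c v)) _
            (ihv fun z hz => h z (Multiset.mem_cons_of_mem hz))
      exact main s fun z hz => hall z (Multiset.mem_cons_of_mem hz)
    have hbC : b ∈ C := hall b (Multiset.mem_cons_self b s)
    rw [Multiset.sum_cons] at hsum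
    obtain ⟨hbF, hsF⟩ := mem_of_add_mem_face hCsmul hF hbC hsC hsum
    rcases Multiset.mem_cons.mp hz with rfl | hz'
    · exact hbF
    · exact ih (fun w hw => hall w (Multiset.mem_cons_of_mem hw)) hsF z hz'

lemma msum_finset_sum {ι : Type*} (s : Finset ι) (f : ι → Multiset (Fin d → ℤ)) :
    (∑ i ∈ s, f i).sum = ∑ i ∈ s, (f i).sum := by
  classical
  induction s using Finset.induction with
  | empty => simp
  | insert j t hni ih => simp [Finset.sum_insert hni, ih]

lemma key_nat {M : AddSubmonoid (Fin d → ℤ)}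
    (hred : ∀ x ∈ M, -x ∈ M → x = 0) (hatomic : AddIsAtomicIn M)
    {a : Fin d → ℤ} (hsa : AddIsStrongAtomIn M a)
    {n : ℕ} (k : Fin n → ℕ) (m : Fin n → Fin d → ℤ) (hm : ∀ i, m i ∈ M)
    (p : ℕ) (hsum : ∑ i, k i • m i = p • a) :
    ∀ i, 0 < k i → ∃ r : ℕ, m i = r • a := by
  classical
  rcases Nat.eq_zero_or_pos p with rfl | hp
  · rw [zero_smul] at hsum
    intro i hki
    refine ⟨0, ?_⟩
    rw [zero_smul]
    have hmem : k i • m i ∈ M := AddSubmonoid.nsmul_mem M (hm i) _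
    have herase : k i • m i + ∑ j ∈ Finset.univ.erase i, k j • m j = 0 := by
      rw [Finset.add_sum_erase Finset.univ (fun j => k j • m j) (Finset.mem_univ i)]
      exact hsum
    have hneg : -(k i • m i) ∈ M := by
      rw [neg_eq_of_add_eq_zero_right herase]
      exact AddSubmonoid.sum_mem M fun j _ => AddSubmonoid.nsmul_mem M (hm j) _
    have h0 : k i • m i = 0 := hred _ hmem hneg
    exact nsmul_eq_zero' (Nat.pos_iff_ne_zero.mp hki) h0
  · have hdec : ∀ i, ∃ s : Multiset (Fin d → ℤ),
        (∀ b ∈ s, AddIsAtomIn M b) ∧ s.sum = m i := by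
      intro i
      by_cases h0 : m i = 0
      · exact ⟨0, by simp, by simp [h0]⟩
      · exact hatomic (m i) (hm i) fun hu => h0 (hred _ hu.1 hu.2)
    choose s hs1 hs2 using hdec
    have hTat : ∀ b ∈ ∑ i, k i • s i, AddIsAtomIn M b := by
      intro b hb
      obtain ⟨i, -, hbi⟩ := Multiset.mem_sum.mp hb
      exact hs1 i b (Multiset.mem_nsmul.mp hbi).2
    have hTsum : (∑ i, k i • s i).sum = p • a := by
      rw [msum_finset_sum]
      simp_rw [Multiset.sum_nsmul, hs2]
      exact hsum
    have hrep := hsa.2 p hp _ hTat hTsum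
    intro i hki
    have hall : ∀ b ∈ s i, b = a := by
      intro b hb
      have hbT : b ∈ ∑ j, k j • s j :=
        Multiset.mem_sum.mpr ⟨i, Finset.mem_univ i,
          Multiset.mem_nsmul.mpr ⟨(Nat.pos_iff_ne_zero.mp hki), hb⟩⟩
      rw [hrep] at hbT
      exact Multiset.eq_of_mem_replicate hbT
    refine ⟨Multiset.card (s i), ?_⟩
    rw [← hs2 i]
    conv_lhs => rw [Multiset.eq_replicate_card.mpr hall]
    rw [Multiset.sum_replicate]

lemma faceMain {M : AddSubmonoid (Fin d → ℤ)}
    (hred : ∀ x ∈ M, -x ∈ M → x = 0) (hatomic : AddIsAtomicIn M)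
    {a : Fin d → ℤ} (hsa : AddIsStrongAtomIn M a)
    {n : ℕ} (e : Fin n → ℚ) (m : Fin n → Fin d → ℤ)
    (he : ∀ i, 0 ≤ e i) (hm : ∀ i, m i ∈ M)
    {q : ℚ} (hq : 0 ≤ q) (hsum : ∑ i, e i • coeZQ (m i) = q • coeZQ a) :
    ∀ i, 0 < e i → ∃ r : ℕ, m i = r • a := by
  classical
  set D : ℕ := q.den * ∏ j, (e j).den with hD
  have hD0 : 0 < D := Nat.mul_pos q.pos (Finset.prod_pos fun j _ => (e j).pos)
  have hdvd : ∀ i, (e i).den ∣ D :=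
    fun i => Dvd.dvd.mul_left (Finset.dvd_prod_of_mem _ (Finset.mem_univ i)) _
  choose k hk using fun i => exists_nat_mul (e i) (he i) D (hdvd i)
  obtain ⟨p, hp⟩ := exists_nat_mul q hq D (Dvd.intro _ rfl)
  have h2 : ∑ i, (k i : ℚ) • coeZQ (m i) = (p : ℚ) • coeZQ a := by
    calc ∑ i, (k i : ℚ) • coeZQ (m i)
        = ∑ i, (D : ℚ) • (e i • coeZQ (m i)) := by
          refine Finset.sum_congr rfl fun i _ => ?_
          rw [hk i, smul_smul, mul_comm]
      _ = (D : ℚ) • ∑ i, e i • coeZQ (m i) := (Finset.smul_sum).symm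
      _ = (p : ℚ) • coeZQ a := by
          rw [hsum, smul_smul, hp, mul_comm]
  have h3 : ∑ i, k i • m i = p • a := by
    apply coeZQ_inj
    rw [show coeZQ (∑ i, k i • m i) = ∑ i, coeZQ (k i • m i) from coeZQ_sum _,
      coeZQ_nsmul]
    simp_rw [coeZQ_nsmul]
    exact h2
  intro i hei
  refine key_nat hred hatomic hsa k m hm p h3 i ?_
  have : (0:ℚ) < k i := by
    rw [hk i]
    exact mul_pos hei (by exact_mod_cast hD0)
  exact_mod_cast this

lemma repr_mem_F {a : Fin d → ℤ} {n : ℕ} (e : Fin n → ℚ) (m : Fin n → Fin d → ℤ)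
    (he : ∀ i, 0 ≤ e i) (h : ∀ i, 0 < e i → ∃ r : ℕ, m i = r • a) :
    ∃ q : ℚ, 0 ≤ q ∧ ∑ i, e i • coeZQ (m i) = q • coeZQ a := by
  classical
  choose r hr using h
  refine ⟨∑ i, (if hi : 0 < e i then e i * (r i hi : ℚ) else 0), ?_, ?_⟩
  · refine Finset.sum_nonneg fun i _ => ?_
    split
    · exact mul_nonneg (he i) (by positivity)
    · exact le_rfl
  · rw [Finset.sum_smul]
    refine Finset.sum_congr rfl fun i _ => ?_
    by_cases hi : 0 < e i
    · rw [dif_pos hi, hr i hi, coeZQ_nsmul, smul_smul]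
    · have : e i = 0 := le_antisymm (not_lt.mp hi) (he i)
      rw [dif_neg hi, this, zero_smul, zero_smul]

end SAaux

/-- Geometric characterization of strong atoms: for a reduced atomic submonoid `M ⊆ ℤ^d`
with conic hull `C ⊆ ℚ^d`, a nonzero `a ∈ M` is a strong atom iff `ℚ≥0·a` is a
(one-dimensional, as `a ≠ 0`) face of `C` and `M ∩ ℚ≥0·a = ℕ₀·a`. -/
theorem strong_atom_iff_one_dimensional_face {d : ℕ}
    (M : AddSubmonoid (Fin d → ℤ))
    (hred : ∀ x ∈ M, -x ∈ M → x = 0)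
    (hatomic : AddIsAtomicIn M)
    (a : Fin d → ℤ) (haM : a ∈ M) (ha0 : a ≠ 0) :
    AddIsStrongAtomIn M a ↔
      (IsFaceOfQ (conicHullQ (coeZQ '' (M : Set (Fin d → ℤ))))
          {x : Fin d → ℚ | ∃ q : ℚ, 0 ≤ q ∧ x = q • coeZQ a} ∧
        {x : Fin d → ℤ | x ∈ M ∧ ∃ q : ℚ, 0 ≤ q ∧ coeZQ x = q • coeZQ a} =
          {x : Fin d → ℤ | ∃ n : ℕ, x = n • a}) := by
  classical
  have hCsmul : ∀ x ∈ conicHullQ (coeZQ '' (M : Set (Fin d → ℤ))), ∀ c : ℚ, 0 ≤ c →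
      c • x ∈ conicHullQ (coeZQ '' (M : Set (Fin d → ℤ))) :=
    fun x hx c hc => SAaux.smul_mem_hull hx hc
  have hCadd : ∀ x ∈ conicHullQ (coeZQ '' (M : Set (Fin d → ℤ))),
      ∀ y ∈ conicHullQ (coeZQ '' (M : Set (Fin d → ℤ))),
      x + y ∈ conicHullQ (coeZQ '' (M : Set (Fin d → ℤ))) :=
    fun x hx y hy => SAaux.add_mem_hull hx hy
  have hC0 : (0 : Fin d → ℚ) ∈ conicHullQ (coeZQ '' (M : Set (Fin d → ℤ))) :=
    SAaux.zero_mem_hull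
  have hMC : ∀ x ∈ M, coeZQ x ∈ conicHullQ (coeZQ '' (M : Set (Fin d → ℤ))) := by
    intro x hx
    exact ⟨1, fun _ => 1, fun _ => coeZQ x,
      fun i => ⟨zero_le_one, ⟨x, hx, rfl⟩⟩, by simp⟩
  have hunit0 : AddIsUnitIn M 0 := ⟨zero_mem M, by simpa using zero_mem M⟩
  constructor
  · intro hsa
    constructor
    · -- F is a face of C
      refine ⟨?_, ⟨⟨0, 0, le_rfl, by simp⟩, ?_⟩, ?_⟩
      · rintro x ⟨q, hq, rfl⟩
        exact hCsmul _ (hMC a haM) q hq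
      · rintro x ⟨q1, hq1, rfl⟩ y ⟨q2, hq2, rfl⟩ c1 c2 hc1 hc2
        refine ⟨c1 * q1 + c2 * q2, by positivity, ?_⟩
        rw [smul_smul, smul_smul, add_smul]
      · rintro x hx y hy ⟨t, ht0, ht1, q, hq, hte⟩
        obtain ⟨n1, c1, v1, h1, rfl⟩ := hx
        obtain ⟨n2, c2, v2, h2, rfl⟩ := hy
        choose m1 hm1 hme1 using fun i => (h1 i).2
        choose m2 hm2 hme2 using fun i => (h2 i).2
        have ht1' : (0:ℚ) ≤ 1 - t := by linarith
        set e : Fin (n1 + n2) → ℚ :=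
          Fin.append (fun i => t * c1 i) (fun i => (1 - t) * c2 i) with hedef
        set mm : Fin (n1 + n2) → (Fin d → ℤ) := Fin.append m1 m2 with hmmdef
        have he : ∀ i, 0 ≤ e i := by
          intro i
          refine Fin.addCases (fun j => ?_) (fun j => ?_) i
          · rw [hedef]; rw [Fin.append_left]
            exact mul_nonneg ht0.le (h1 j).1
          · rw [hedef]; rw [Fin.append_right]
            exact mul_nonneg ht1' (h2 j).1
        have hmm : ∀ i, mm i ∈ M := by
          intro i
          refine Fin.addCases (fun j => ?_) (fun j => ?_) i
          · rw [hmmdef]; rw [Fin.append_left]; exact hm1 j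
          · rw [hmmdef]; rw [Fin.append_right]; exact hm2 j
        have heq : ∑ i, e i • coeZQ (mm i) = q • coeZQ a := by
          rw [Fin.sum_univ_add]
          simp only [hedef, hmmdef, Fin.append_left, Fin.append_right]
          rw [← hte, Finset.smul_sum, Finset.smul_sum]
          congr 1
          · refine Finset.sum_congr rfl fun j _ => ?_
            rw [hme1 j, smul_smul]
          · refine Finset.sum_congr rfl fun j _ => ?_
            rw [hme2 j, smul_smul]
        have key := SAaux.faceMain hred hatomic hsa e mm he hmm hq heq
        constructor
        · obtain ⟨q1', hq1', hs1'⟩ := SAaux.repr_mem_F c1 m1 (fun i => (h1 i).1)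
            (fun i hi => by
              have hk := key (Fin.castAdd n2 i) (by
                rw [hedef]; rw [Fin.append_left]; exact mul_pos ht0 hi)
              rwa [hmmdef, Fin.append_left] at hk)
          refine ⟨q1', hq1', ?_⟩
          rw [← hs1']
          exact Finset.sum_congr rfl fun j _ => by rw [hme1 j]
        · obtain ⟨q2', hq2', hs2'⟩ := SAaux.repr_mem_F c2 m2 (fun i => (h2 i).1)
            (fun i hi => by
              have hk := key (Fin.natAdd n1 i) (by
                rw [hedef]; rw [Fin.append_right]
                exact mul_pos (by linarith : (0:ℚ) < 1 - t) hi)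
              rwa [hmmdef, Fin.append_right] at hk)
          refine ⟨q2', hq2', ?_⟩
          rw [← hs2']
          exact Finset.sum_congr rfl fun j _ => by rw [hme2 j]
    · -- set equality
      ext x
      simp only [Set.mem_setOf_eq]
      constructor
      · rintro ⟨hxM, q, hq, hxq⟩
        obtain ⟨p, hp⟩ := SAaux.exists_nat_mul q hq q.den dvd_rfl
        have hzx : q.den • x = p • a := by
          apply SAaux.coeZQ_inj
          rw [SAaux.coeZQ_nsmul, SAaux.coeZQ_nsmul, hxq, smul_smul, mul_comm, ← hp]
        have := SAaux.key_nat hred hatomic hsa (fun _ : Fin 1 => q.den)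
          (fun _ => x) (fun _ => hxM) p (by simpa using hzx) 0 q.pos
        exact this
      · rintro ⟨n, rfl⟩
        exact ⟨AddSubmonoid.nsmul_mem M haM n, n, Nat.cast_nonneg n,
          SAaux.coeZQ_nsmul n a⟩
  · rintro ⟨hface, hsets⟩
    have hFtoM : ∀ x ∈ M, (∃ q : ℚ, 0 ≤ q ∧ coeZQ x = q • coeZQ a) →
        ∃ n : ℕ, x = n • a := by
      intro x hx hxF
      have hmem : x ∈ {x : Fin d → ℤ | x ∈ M ∧ ∃ q : ℚ, 0 ≤ q ∧ coeZQ x = q • coeZQ a} :=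
        ⟨hx, hxF⟩
      rw [hsets] at hmem
      exact hmem
    have hnsmul_unit : ∀ k : ℕ, 0 < k → ¬ AddIsUnitIn M (k • a) := by
      intro k hk hu
      have h0 := hred _ hu.1 hu.2
      exact ha0 (SAaux.nsmul_eq_zero' (Nat.pos_iff_ne_zero.mp hk) h0)
    have hatom : AddIsAtomIn M a := by
      refine ⟨haM, fun hu => ha0 (hred a hu.1 hu.2), ?_⟩
      intro b c hb hc habc
      have haF : coeZQ b + coeZQ c ∈
          {x : Fin d → ℚ | ∃ q : ℚ, 0 ≤ q ∧ x = q • coeZQ a} := by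
        rw [← SAaux.coeZQ_add, ← habc]
        exact ⟨1, zero_le_one, (one_smul _ _).symm⟩
      obtain ⟨hbF, hcF⟩ := SAaux.mem_of_add_mem_face hCsmul hface
        (hMC b hb) (hMC c hc) haF
      obtain ⟨nb, rfl⟩ := hFtoM b hb hbF
      obtain ⟨nc, rfl⟩ := hFtoM c hc hcF
      have h1 : (1:ℕ) • a = (nb + nc) • a := by
        rw [one_smul, add_nsmul]; exact habc
      have h2 : nb + nc = 1 := (SAaux.nsmul_cancel ha0 h1).symm
      rcases (by omega : nb = 0 ∨ nc = 0) with h | h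
      · left; rw [h, zero_nsmul]; exact hunit0
      · right; rw [h, zero_nsmul]; exact hunit0
    refine ⟨hatom, ?_⟩
    intro n hn s hs hsum
    have hselt : ∀ b ∈ s, b = a := by
      intro b hb
      have hbM : b ∈ M := (hs b hb).1
      have hsumF : (s.map coeZQ).sum ∈
          {x : Fin d → ℚ | ∃ q : ℚ, 0 ≤ q ∧ x = q • coeZQ a} := by
        rw [← SAaux.coeZQ_msum, hsum, SAaux.coeZQ_nsmul]
        exact ⟨n, Nat.cast_nonneg n, rfl⟩
      have hbF := SAaux.multiset_mem_face hC0 hCadd hCsmul hface (s.map coeZQ)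
        (by
          intro z hz
          obtain ⟨w, hw, rfl⟩ := Multiset.mem_map.mp hz
          exact hMC w (hs w hw).1) hsumF (coeZQ b) (Multiset.mem_map_of_mem _ hb)
      obtain ⟨nb, hnb⟩ := hFtoM b hbM hbF
      have hb0 : nb ≠ 0 := by
        rintro rfl
        rw [zero_nsmul] at hnb
        exact (hs b hb).2.1 (hnb ▸ hunit0)
      rcases Nat.lt_or_ge nb 2 with h2 | h2
      · have hnb1 : nb = 1 := by omega
        rw [hnb, hnb1, one_smul]
      · exfalso
        have hsplit : b = a + (nb - 1) • a := by
          calc b = nb • a := hnb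
            _ = (nb - 1 + 1) • a := by rw [Nat.sub_add_cancel (by omega)]
            _ = (nb - 1) • a + a := succ_nsmul a (nb - 1)
            _ = a + (nb - 1) • a := add_comm _ _
        have hor := (hs b hb).2.2 a ((nb - 1) • a) haM
          (AddSubmonoid.nsmul_mem M haM _) hsplit
        rcases hor with h | h
        · exact hnsmul_unit 1 one_pos (by rwa [one_smul]) |>.elim
        · exact hnsmul_unit (nb - 1) (by omega) h
    have hcard := Multiset.eq_replicate_card.mpr hselt
    have hceq : Multiset.card s = n := by
      apply SAaux.nsmul_cancel ha0
      rw [← Multiset.sum_replicate, ← hcard, hsum]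
    rw [hcard, hceq]
end

section
/- Let M be a reduced atomic additive submonoid of ℤ^d whose conic hull in ℚ^d is the conic hull of a finite set (polyhedral). Then M has only finitely many strong atoms. -/
/- ----------------- auxiliary lemmas ----------------- -/

lemma coeZQ_injective {d : ℕ} : Function.Injective (coeZQ (d := d)) := by
  intro x y h
  funext i
  have := congrFun h i
  simpa [coeZQ] using this

/-- `coeZQ` as an additive monoid homomorphism. -/
def coeZQHom (d : ℕ) : (Fin d → ℤ) →+ (Fin d → ℚ) where
  toFun := coeZQ
  map_zero' := by funext i; simp [coeZQ]
  map_add' := by intro x y; funext i; simp [coeZQ]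

lemma coeZQ_nsmul {d : ℕ} (n : ℕ) (x : Fin d → ℤ) :
    coeZQ (n • x) = (n : ℚ) • coeZQ x := by
  funext i
  simp only [coeZQ, Pi.smul_apply, smul_eq_mul, nsmul_eq_mul]
  push_cast
  ring

lemma rat_eq_div (q : ℚ) (hq : 0 < q) :
    ∃ m n : ℕ, 0 < m ∧ 0 < n ∧ q = (m : ℚ) / (n : ℚ) := by
  have h0 : 0 < q.num := Rat.num_pos.mpr hq
  refine ⟨q.num.toNat, q.den, by omega, q.pos, ?_⟩
  have h1 : ((q.num.toNat : ℤ) : ℚ) = (q.num : ℚ) := by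
    rw [Int.toNat_of_nonneg h0.le]
  push_cast at h1 ⊢
  rw [h1, Rat.num_div_den]

lemma exists_nat_eq_mul (c : ℚ) (hc : 0 ≤ c) (N : ℕ) (hd : c.den ∣ N) :
    ∃ k : ℕ, (k : ℚ) = c * N := by
  obtain ⟨m, rfl⟩ := hd
  refine ⟨c.num.toNat * m, ?_⟩
  have hd0 : (c.den : ℚ) ≠ 0 := Nat.cast_ne_zero.mpr c.den_ne_zero
  have h1 : ((c.num.toNat : ℕ) : ℚ) = (c.num : ℚ) := by
    exact_mod_cast congrArg (fun z : ℤ => (z : ℚ)) (Int.toNat_of_nonneg (Rat.num_nonneg.mpr hc))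
  have h2 : (c.num : ℚ) = c * (c.den : ℚ) := (div_eq_iff hd0).mp (Rat.num_div_den c)
  rw [Nat.cast_mul, Nat.cast_mul, h1, h2]
  ring

lemma exists_common_scale {n : ℕ} (c : Fin n → ℚ) (hc : ∀ i, 0 ≤ c i) :
    ∃ K : ℕ, 0 < K ∧ ∀ i, ∃ k : ℕ, (k : ℚ) = c i * K := by
  refine ⟨∏ i, (c i).den, Finset.prod_pos (fun i _ => (c i).pos), fun i =>
    exists_nat_eq_mul _ (hc i) _ (Finset.dvd_prod_of_mem _ (Finset.mem_univ i))⟩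

/-- Every element of the conic hull of `coeZQ '' M` has a positive natural multiple
which is (the image of) an element of `M`. -/
lemma exists_nat_mult_mem {d : ℕ} (M : AddSubmonoid (Fin d → ℤ)) (y : Fin d → ℚ)
    (hy : y ∈ conicHullQ (coeZQ '' (M : Set (Fin d → ℤ)))) :
    ∃ N : ℕ, 0 < N ∧ ∃ u ∈ M, coeZQ u = (N : ℚ) • y := by
  obtain ⟨n, c, v, hcv, rfl⟩ := hy
  have hc : ∀ i, 0 ≤ c i := fun i => (hcv i).1
  have hv : ∀ i, ∃ u, u ∈ M ∧ coeZQ u = v i := fun i => (hcv i).2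
  choose m hm hmv using hv
  obtain ⟨K, hK, hk⟩ := exists_common_scale c hc
  choose k hkk using hk
  refine ⟨K, hK, ∑ i, k i • m i,
    AddSubmonoid.sum_mem M (fun i _ => AddSubmonoid.nsmul_mem M (hm i) (k i)), ?_⟩
  have : coeZQ (∑ i, k i • m i) = ∑ i, coeZQ (k i • m i) :=
    map_sum (coeZQHom d) (fun i => k i • m i) Finset.univ
  rw [this, Finset.smul_sum]
  refine Finset.sum_congr rfl (fun i _ => ?_)
  rw [coeZQ_nsmul, hmv, hkk, smul_smul, mul_comm (c i) (K : ℚ)]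

/-- A reduced atomic submonoid of `ℤ^d` whose conic hull in `ℚ^d` is polyhedral
(the conic hull of a finite set) has only finitely many strong atoms. -/
theorem finitely_many_strong_atoms_of_polyhedral {d : ℕ}
    (M : AddSubmonoid (Fin d → ℤ))
    (hred : ∀ x ∈ M, -x ∈ M → x = 0)
    (hatomic : AddIsAtomicIn M)
    (hpoly : ∃ X : Finset (Fin d → ℚ),
      conicHullQ (coeZQ '' (M : Set (Fin d → ℤ))) = conicHullQ (X : Set (Fin d → ℚ))) :
    {a : Fin d → ℤ | AddIsStrongAtomIn M a}.Finite := by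
  obtain ⟨X, hX⟩ := hpoly
  have hunit0 : AddIsUnitIn M 0 := ⟨zero_mem M, by simpa using zero_mem M⟩
  -- every element of M is a sum of atoms
  have hdecomp : ∀ u ∈ M, ∃ s : Multiset (Fin d → ℤ),
      (∀ b ∈ s, AddIsAtomIn M b) ∧ s.sum = u := by
    intro u hu
    by_cases h : u = 0
    · exact ⟨0, by simp, by simp [h]⟩
    · exact hatomic u hu (fun hx => h (hred u hx.1 hx.2))
  -- key: every strong atom is a positive multiple of some generator in X
  have key : ∀ a, AddIsStrongAtomIn M a →
      ∃ x ∈ X, ∃ q : ℚ, 0 < q ∧ coeZQ a = q • x := by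
    intro a ha
    have haM : a ∈ M := ha.1.1
    have ha0 : a ≠ 0 := fun h => ha.1.2.1 (h ▸ hunit0)
    have hca0 : coeZQ a ≠ 0 := by
      intro h
      exact ha0 (coeZQ_injective (by rw [h]; funext i; simp [coeZQ]))
    have hmem : coeZQ a ∈ conicHullQ (X : Set (Fin d → ℚ)) := by
      rw [← hX]
      exact ⟨1, fun _ => 1, fun _ => coeZQ a,
        fun i => ⟨zero_le_one, ⟨a, haM, rfl⟩⟩, by simp⟩
    obtain ⟨n, c, x, hcx, hsum⟩ := hmem
    have hc : ∀ i, 0 ≤ c i := fun i => (hcx i).1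
    have hxX : ∀ i, x i ∈ X := fun i => (hcx i).2
    have hxC : ∀ i, x i ∈ conicHullQ (coeZQ '' (M : Set (Fin d → ℤ))) := by
      intro i
      rw [hX]
      exact ⟨1, fun _ => 1, fun _ => x i, fun _ => ⟨zero_le_one, hxX i⟩, by simp⟩
    choose N hN u hu huv using fun i => exists_nat_mult_mem M (x i) (hxC i)
    have hN0 : ∀ i, ((N i : ℚ)) ≠ 0 := fun i => Nat.cast_ne_zero.mpr (hN i).ne'
    obtain ⟨K, hK, hk⟩ := exists_common_scale (fun i => c i / N i)
      (fun i => div_nonneg (hc i) (Nat.cast_nonneg _))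
    choose k hkk using hk
    -- K • a = ∑ k i • u i
    have hKa : K • a = ∑ i, k i • u i := by
      apply coeZQ_injective
      have h1 : coeZQ (∑ i, k i • u i) = ∑ i, coeZQ (k i • u i) :=
        map_sum (coeZQHom d) (fun i => k i • u i) Finset.univ
      rw [coeZQ_nsmul, h1, hsum, Finset.smul_sum]
      refine Finset.sum_congr rfl (fun i _ => ?_)
      rw [coeZQ_nsmul, huv, hkk, smul_smul, smul_smul]
      congr 1
      field_simp [hN0 i]
    -- decompose each u i into atoms
    choose s hs hssum using fun i => hdecomp (u i) (hu i)
    set S : Multiset (Fin d → ℤ) := ∑ i, k i • s i with hS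
    have hSsum : S.sum = K • a := by
      rw [hKa, hS]
      have : (∑ i, k i • s i).sum = ∑ i, (k i • s i).sum := by
        rw [← Multiset.coe_sumAddMonoidHom]
        exact map_sum Multiset.sumAddMonoidHom (fun i => k i • s i) Finset.univ
      rw [this]
      refine Finset.sum_congr rfl (fun i _ => ?_)
      rw [← Multiset.coe_sumAddMonoidHom, AddMonoidHom.map_nsmul,
        Multiset.coe_sumAddMonoidHom, hssum]
    have hSatoms : ∀ b ∈ S, AddIsAtomIn M b := by
      intro b hb
      rw [hS, Multiset.mem_sum] at hb
      obtain ⟨i, _, hbi⟩ := hb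
      exact hs i b (Multiset.mem_nsmul.mp hbi).2
    have hrep : S = Multiset.replicate K a := ha.2 K hK S hSatoms hSsum
    -- hence each u i with k i ≠ 0 is a natural multiple of a
    have hui : ∀ i, k i ≠ 0 → u i = (Multiset.card (s i)) • a := by
      intro i hki
      have hall : ∀ b ∈ s i, b = a := by
        intro b hb
        have hbS : b ∈ S := by
          rw [hS, Multiset.mem_sum]
          exact ⟨i, Finset.mem_univ i, Multiset.mem_nsmul.mpr ⟨hki, hb⟩⟩
        rw [hrep] at hbS
        exact Multiset.eq_of_mem_replicate hbS
      have := Multiset.eq_replicate_card.mpr hall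
      rw [← hssum i, this, Multiset.sum_replicate]
      congr 1
      exact (Multiset.card_replicate _ _).symm
    -- k i is nonzero whenever c i is nonzero
    have hkne : ∀ i, c i ≠ 0 → k i ≠ 0 := by
      intro i hci h
      have hkkI := hkk i
      rw [h] at hkkI
      simp only [Nat.cast_zero] at hkkI
      have hKne : (K : ℚ) ≠ 0 := Nat.cast_ne_zero.mpr hK.ne'
      rcases mul_eq_zero.mp hkkI.symm with h' | h'
      · exact hci ((div_eq_zero_iff.mp h').resolve_right (hN0 i))
      · exact hKne h'
    -- relate each term c i • x i to coeZQ a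
    set r : Fin n → ℚ := fun i =>
      if c i = 0 then 0 else c i * (((N i : ℚ))⁻¹ * (Multiset.card (s i) : ℚ)) with hr
    have hxi : ∀ i, c i ≠ 0 →
        x i = (((N i : ℚ))⁻¹ * (Multiset.card (s i) : ℚ)) • coeZQ a := by
      intro i hci
      have hx : (N i : ℚ) • x i = (Multiset.card (s i) : ℚ) • coeZQ a := by
        rw [← huv, hui i (hkne i hci), coeZQ_nsmul]
      have := congrArg (fun z => ((N i : ℚ))⁻¹ • z) hx
      simp only [smul_smul] at this
      rw [inv_mul_cancel₀ (hN0 i), one_smul] at this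
      exact this
    have hterm : ∀ i, c i • x i = r i • coeZQ a := by
      intro i
      by_cases hci : c i = 0
      · simp [hr, hci]
      · rw [hxi i hci, smul_smul, hr]
        simp [hci]
    have hsum2 : coeZQ a = (∑ i, r i) • coeZQ a := by
      rw [Finset.sum_smul]
      conv_lhs => rw [hsum]
      exact Finset.sum_congr rfl (fun i _ => hterm i)
    have hr1 : (∑ i, r i) = 1 := by
      by_contra h
      have h0 : ((∑ i, r i) - 1) • coeZQ a = 0 := by
        rw [sub_smul, one_smul, ← hsum2, sub_self]
      rcases smul_eq_zero.mp h0 with h' | h'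
      · exact h (by linarith [sub_eq_zero.mp h'])
      · exact hca0 h'
    have hex : ∃ i, r i ≠ 0 := by
      by_contra h
      push_neg at h
      rw [Finset.sum_congr rfl (fun i _ => h i)] at hr1
      simp at hr1
    obtain ⟨i, hri⟩ := hex
    have hci : c i ≠ 0 := by
      intro h
      apply hri
      simp [hr, h]
    have hti : (Multiset.card (s i) : ℚ) ≠ 0 := by
      intro h
      apply hri
      simp [hr, hci, h]
    have htipos : (0 : ℚ) < (Multiset.card (s i) : ℚ) :=
      lt_of_le_of_ne (Nat.cast_nonneg _) (Ne.symm hti)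
    refine ⟨x i, hxX i, ((Multiset.card (s i) : ℚ))⁻¹ * (N i : ℚ), ?_, ?_⟩
    · exact mul_pos (inv_pos.mpr htipos) (by exact_mod_cast hN i)
    · have hx : (N i : ℚ) • x i = (Multiset.card (s i) : ℚ) • coeZQ a := by
        rw [← huv, hui i (hkne i hci), coeZQ_nsmul]
      have := congrArg (fun z => ((Multiset.card (s i) : ℚ))⁻¹ • z) hx.symm
      simp only [smul_smul] at this
      rw [inv_mul_cancel₀ hti, one_smul] at this
      exact this
  -- now use key to embed strong atoms into X
  set SA := {a : Fin d → ℤ | AddIsStrongAtomIn M a} with hSA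
  have hchoice : ∀ a : SA, ∃ x ∈ X, ∃ q : ℚ, 0 < q ∧ coeZQ a.1 = q • x :=
    fun a => key a.1 a.2
  choose f hfX qf hqf hfq using hchoice
  have hinj : Function.Injective (fun a : SA => (⟨f a, hfX a⟩ : {x // x ∈ X})) := by
    intro a b hab
    have hfab : f a = f b := congrArg Subtype.val hab
    obtain ⟨m1, n1, hm1, hn1, hq1⟩ := rat_eq_div (qf a) (hqf a)
    obtain ⟨m2, n2, hm2, hn2, hq2⟩ := rat_eq_div (qf b) (hqf b)
    -- (n1 : ℚ) • coeZQ a = m1 • f a etc.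
    have hn1' : (n1 : ℚ) ≠ 0 := Nat.cast_ne_zero.mpr hn1.ne'
    have hn2' : (n2 : ℚ) ≠ 0 := Nat.cast_ne_zero.mpr hn2.ne'
    have e1 : (n1 : ℚ) • coeZQ a.1 = (m1 : ℚ) • f a := by
      rw [hfq a, hq1, smul_smul]
      congr 1
      field_simp
    have e2 : (n2 : ℚ) • coeZQ b.1 = (m2 : ℚ) • f a := by
      rw [hfab, hfq b, hq2, smul_smul]
      congr 1
      field_simp
    have e3 : ((m2 * n1 : ℕ) : ℚ) • coeZQ a.1 = ((m1 * n2 : ℕ) : ℚ) • coeZQ b.1 := by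
      push_cast
      rw [mul_smul, e1, mul_smul, e2, smul_smul, smul_smul, mul_comm]
    have e4 : (m2 * n1) • a.1 = (m1 * n2) • b.1 := by
      apply coeZQ_injective
      rw [coeZQ_nsmul, coeZQ_nsmul]
      exact e3
    -- apply strongness of a to the factorization n • b of m • a
    have hb : AddIsStrongAtomIn M b.1 := b.2
    have haS : AddIsStrongAtomIn M a.1 := a.2
    have hsum : (Multiset.replicate (m1 * n2) b.1).sum = (m2 * n1) • a.1 := by
      rw [Multiset.sum_replicate, e4]
    have hatoms : ∀ x ∈ Multiset.replicate (m1 * n2) b.1, AddIsAtomIn M x := by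
      intro x hx
      rw [Multiset.eq_of_mem_replicate hx]
      exact hb.1
    have hrep := haS.2 (m2 * n1) (Nat.mul_pos hm2 hn1) _ hatoms hsum
    have hbmem : b.1 ∈ Multiset.replicate (m1 * n2) b.1 :=
      Multiset.mem_replicate.mpr ⟨(Nat.mul_pos hm1 hn2).ne', rfl⟩
    rw [hrep] at hbmem
    exact Subtype.ext (Multiset.eq_of_mem_replicate hbmem).symm
  have : Finite SA := Finite.of_injective _ hinj
  exact Set.finite_coe_iff.mp this
end

section
/- Let H = 4ℕ₀ + 1 be the Hilbert monoid under multiplication. Then the set of prime elements of H is exactly {p prime : p ≡ 1 (mod 4)}, and the set of strong atoms of H is {p prime : p ≡ 1 (mod 4)} ∪ {p² : p prime, p ≡ 3 (mod 4)}. -/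
/-- `a` is an atom of the multiplicative submonoid `H ⊆ ℕ`: a non-unit element of `H`
that is not a product of two non-units of `H` (the only unit of such an `H` is `1`). -/
def MulIsAtomIn (H : Submonoid ℕ) (a : ℕ) : Prop :=
  a ∈ H ∧ a ≠ 1 ∧ ∀ b c : ℕ, b ∈ H → c ∈ H → a = b * c → b = 1 ∨ c = 1

/-- Divisibility within the submonoid `H ⊆ ℕ`. -/
def MulDvdIn (H : Submonoid ℕ) (a b : ℕ) : Prop := ∃ c ∈ H, b = a * c

/-- `p` is a prime element of `H`: a non-unit such that whenever `p` divides a product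
`b * c` in `H`, it divides `b` or `c` in `H`. -/
def MulIsPrimeIn (H : Submonoid ℕ) (p : ℕ) : Prop :=
  p ∈ H ∧ p ≠ 1 ∧ ∀ b c : ℕ, b ∈ H → c ∈ H →
    MulDvdIn H p (b * c) → MulDvdIn H p b ∨ MulDvdIn H p c

/-- `a` is a strong atom of `H`: an atom all of whose powers `a ^ n` factor uniquely into
atoms of `H` (namely as `n` copies of `a`). -/
def MulIsStrongAtomIn (H : Submonoid ℕ) (a : ℕ) : Prop :=
  MulIsAtomIn H a ∧ ∀ n : ℕ, 0 < n → ∀ s : Multiset ℕ,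
    (∀ b ∈ s, MulIsAtomIn H b) → s.prod = a ^ n → s = Multiset.replicate n a

private lemma mul_mod4_33 {q r : ℕ} (hq : q % 4 = 3) (hr : r % 4 = 3) : (q * r) % 4 = 1 := by
  have h := Nat.mul_mod q r 4
  rw [hq, hr] at h; omega

private lemma odd_mod4 {n : ℕ} (hn : n % 2 = 1) : n % 4 = 1 ∨ n % 4 = 3 := by
  have := Nat.mod_mod_of_dvd n (by norm_num : 2 ∣ 4)
  omega

private lemma prime_factor_mod4 {q n : ℕ} (hq : Nat.Prime q) (hd : q ∣ n)
    (hn : n % 4 = 1 ∨ n % 4 = 3) : q % 4 = 1 ∨ q % 4 = 3 := by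
  have hodd : n % 2 = 1 := by
    have := Nat.mod_mod_of_dvd n (by norm_num : 2 ∣ 4); omega
  have hq2 : q ≠ 2 := by
    rintro rfl
    obtain ⟨k, rfl⟩ := hd
    omega
  exact odd_mod4 (Nat.odd_iff.mp (hq.odd_of_ne_two hq2))

/-- Every natural number `≡ 3 (mod 4)` has a prime factor `≡ 3 (mod 4)`. -/
private lemma exists_prime_3mod4 (n : ℕ) (hn : n % 4 = 3) :
    ∃ q, Nat.Prime q ∧ q % 4 = 3 ∧ q ∣ n := by
  induction n using Nat.strong_induction_on with
  | _ n ih =>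
    have hn1 : n ≠ 1 := by omega
    have hq : Nat.Prime n.minFac := Nat.minFac_prime hn1
    have hqd : n.minFac ∣ n := Nat.minFac_dvd n
    rcases prime_factor_mod4 hq hqd (Or.inr hn) with h1 | h3
    · obtain ⟨y, hy⟩ := hqd
      have hy4 : y % 4 = 3 := by
        have h2 := Nat.mul_mod n.minFac y 4
        rw [h1, ← hy] at h2; omega
      have hylt : y < n := by
        have h2 := hq.two_le
        have hy3 : 3 ≤ y := by omega
        rcases Nat.lt_or_ge y n with h | h
        · exact h
        · exfalso; nlinarith [hy]
      obtain ⟨r, hr, hr4, hrd⟩ := ih y hylt hy4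
      exact ⟨r, hr, hr4, hrd.trans (Dvd.intro_left _ hy.symm)⟩
    · exact ⟨n.minFac, hq, h3, hqd⟩

/-- For `p ≡ 1 (mod 4)`, divisibility in `H` by `p` agrees with natural divisibility. -/
private lemma dvdIn_iff {H : Submonoid ℕ} (hmem : ∀ n : ℕ, n ∈ H ↔ n % 4 = 1)
    {p n : ℕ} (hp4 : p % 4 = 1) (hn4 : n % 4 = 1) : MulDvdIn H p n ↔ p ∣ n := by
  constructor
  · rintro ⟨c, _, rfl⟩; exact Dvd.intro c rfl
  · rintro ⟨c, rfl⟩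
    refine ⟨c, (hmem c).mpr ?_, rfl⟩
    have h2 := Nat.mul_mod p c 4
    rw [hp4] at h2; omega

private lemma dvd_qr {q r b : ℕ} (hq : Nat.Prime q) (hr : Nat.Prime r)
    (hq4 : q % 4 = 3) (hr4 : r % 4 = 3) (hb4 : b % 4 = 1) (hdvd : b ∣ q * r) :
    b = 1 ∨ b = q * r := by
  by_cases hqb : q ∣ b
  · obtain ⟨b', rfl⟩ := hqb
    have hb' : b' ∣ r := (Nat.mul_dvd_mul_iff_left hq.pos).mp hdvd
    rcases (Nat.dvd_prime hr).mp hb' with h1 | h1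
    · subst h1; omega
    · subst h1; right; rfl
  · have hco : Nat.Coprime b q := Nat.coprime_comm.mp ((Nat.Prime.coprime_iff_not_dvd hq).mpr hqb)
    have hbr : b ∣ r := hco.dvd_of_dvd_mul_right (by rwa [mul_comm] at hdvd)
    rcases (Nat.dvd_prime hr).mp hbr with h1 | h1
    · exact Or.inl h1
    · omega

/-- Classification of the atoms of the Hilbert monoid. -/
private lemma atomIn_iff {H : Submonoid ℕ} (hmem : ∀ n : ℕ, n ∈ H ↔ n % 4 = 1) (a : ℕ) :
    MulIsAtomIn H a ↔
      (Nat.Prime a ∧ a % 4 = 1) ∨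
      (∃ q r, Nat.Prime q ∧ Nat.Prime r ∧ q % 4 = 3 ∧ r % 4 = 3 ∧ a = q * r) := by
  constructor
  · rintro ⟨haH, ha1, hfac⟩
    have ha4 : a % 4 = 1 := (hmem a).mp haH
    by_cases hap : Nat.Prime a
    · exact Or.inl ⟨hap, ha4⟩
    · right
      obtain ⟨q, hq, y, hy⟩ : ∃ q, Nat.Prime q ∧ ∃ y, a = q * y := by
        obtain ⟨y, hy⟩ := Nat.minFac_dvd a
        exact ⟨a.minFac, Nat.minFac_prime ha1, y, hy⟩
      have hy1 : y ≠ 1 := by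
        rintro rfl; rw [mul_one] at hy; exact hap (hy ▸ hq)
      rcases prime_factor_mod4 hq (Dvd.intro y hy.symm) (Or.inl ha4) with h1 | h3
      · have hy4 : y % 4 = 1 := by
          have h2 := Nat.mul_mod q y 4
          rw [h1, ← hy] at h2; omega
        rcases hfac _ _ ((hmem _).mpr h1) ((hmem _).mpr hy4) hy with h | h
        · exact absurd h hq.ne_one
        · exact absurd h hy1
      · have hy4 : y % 4 = 3 := by
          have h2 := Nat.mul_mod q y 4
          rw [h3, ← hy] at h2; omega
        obtain ⟨r, hr, z, hz⟩ : ∃ r, Nat.Prime r ∧ ∃ z, y = r * z := by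
          obtain ⟨z, hz⟩ := Nat.minFac_dvd y
          exact ⟨y.minFac, Nat.minFac_prime hy1, z, hz⟩
        rcases prime_factor_mod4 hr (Dvd.intro z hz.symm) (Or.inr hy4) with h1 | h3'
        · exfalso
          have hz4 : z % 4 = 3 := by
            have h2 := Nat.mul_mod r z 4
            rw [h1, ← hz] at h2; omega
          have key : a = (q * z) * r := by rw [hy, hz]; ring
          rcases hfac _ _ ((hmem _).mpr (mul_mod4_33 h3 hz4)) ((hmem _).mpr h1) key with h | h
          · exact hq.ne_one (Nat.eq_one_of_mul_eq_one_right h)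
          · exact hr.ne_one h
        · have hz4 : z % 4 = 1 := by
            have h2 := Nat.mul_mod r z 4
            rw [h3', ← hz] at h2; omega
          have key : a = (q * r) * z := by rw [hy, hz]; ring
          rcases hfac _ _ ((hmem _).mpr (mul_mod4_33 h3 h3')) ((hmem _).mpr hz4) key with h | h
          · exact absurd (Nat.eq_one_of_mul_eq_one_right h) hq.ne_one
          · subst h; rw [mul_one] at hz
            exact ⟨q, r, hq, hr, h3, h3', by rw [hy, hz]⟩
  · rintro (⟨hp, hp4⟩ | ⟨q, r, hq, hr, hq4, hr4, rfl⟩)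
    · refine ⟨(hmem a).mpr hp4, hp.ne_one, fun b c hb hc habc => ?_⟩
      rcases (Nat.dvd_prime hp).mp (Dvd.intro c habc.symm) with h1 | h1
      · exact Or.inl h1
      · right
        subst h1
        have : b * 1 = b * c := by rw [mul_one, ← habc]
        exact (Nat.eq_of_mul_eq_mul_left hp.pos this).symm
    · refine ⟨(hmem _).mpr (mul_mod4_33 hq4 hr4), ?_, fun b c hb hc habc => ?_⟩
      · intro h
        exact hq.ne_one (Nat.eq_one_of_mul_eq_one_right h)
      · rcases dvd_qr hq hr hq4 hr4 ((hmem b).mp hb) (Dvd.intro c habc.symm) with h1 | h1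
        · exact Or.inl h1
        · right
          rw [h1] at habc
          have hpos : 0 < q * r := Nat.mul_pos hq.pos hr.pos
          have h2 : (q * r) * 1 = (q * r) * c := by rw [mul_one]; exact habc
          exact (Nat.eq_of_mul_eq_mul_left hpos h2).symm

/-- Classification of the prime elements of the Hilbert monoid. -/
private lemma primeIn_iff {H : Submonoid ℕ} (hmem : ∀ n : ℕ, n ∈ H ↔ n % 4 = 1) (p : ℕ) :
    MulIsPrimeIn H p ↔ Nat.Prime p ∧ p % 4 = 1 := by
  constructor
  · rintro ⟨hpH, hp1, hprime⟩
    have hp4 := (hmem p).mp hpH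
    refine ⟨?_, hp4⟩
    by_contra hnp
    obtain ⟨q, hq, y, hy⟩ : ∃ q, Nat.Prime q ∧ ∃ y, p = q * y := by
      obtain ⟨y, hy⟩ := Nat.minFac_dvd p
      exact ⟨p.minFac, Nat.minFac_prime hp1, y, hy⟩
    have hy1 : y ≠ 1 := by
      rintro rfl; rw [mul_one] at hy; exact hnp (hy ▸ hq)
    have hy0 : y ≠ 0 := by rintro rfl; rw [mul_zero] at hy; omega
    rcases prime_factor_mod4 hq (Dvd.intro y hy.symm) (Or.inl hp4) with h1 | h3
    · have hy4 : y % 4 = 1 := by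
        have h2 := Nat.mul_mod q y 4
        rw [h1, ← hy] at h2; omega
      have hd : MulDvdIn H p (q * y) := ⟨1, (hmem 1).mpr rfl, by rw [mul_one, hy]⟩
      rcases hprime q y ((hmem _).mpr h1) ((hmem _).mpr hy4) hd with h | h
      · have hpq : p ∣ q := (dvdIn_iff hmem hp4 h1).mp h
        rcases (Nat.dvd_prime hq).mp hpq with h' | h'
        · exact hp1 h'
        · exact hnp (h' ▸ hq)
      · have hpy : p ∣ y := (dvdIn_iff hmem hp4 hy4).mp h
        have hle := Nat.le_of_dvd (Nat.pos_of_ne_zero hy0) hpy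
        have := hq.two_le
        have hy3 : 1 ≤ y := Nat.pos_of_ne_zero hy0
        nlinarith [hy]
    · have hy4 : y % 4 = 3 := by
        have h2 := Nat.mul_mod q y 4
        rw [h3, ← hy] at h2; omega
      obtain ⟨r, hrp, hr4, hrd⟩ := exists_prime_3mod4 (4 * p - 1) (by omega)
      have hrnd : ¬ r ∣ p := by
        intro h
        have h4 : r ∣ 4 * p := h.mul_left 4
        have h5 : r ∣ 1 := by
          have h6 := Nat.dvd_sub h4 hrd
          have hp0 : p ≠ 0 := by omega
          rwa [show 4 * p - (4 * p - 1) = 1 by omega] at h6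
        exact hrp.ne_one (Nat.eq_one_of_dvd_one h5)
      have hd : MulDvdIn H p ((q * r) * (y * r)) :=
        ⟨r * r, (hmem _).mpr (mul_mod4_33 hr4 hr4), by rw [hy]; ring⟩
      rcases hprime _ _ ((hmem _).mpr (mul_mod4_33 h3 hr4))
          ((hmem _).mpr (mul_mod4_33 hy4 hr4)) hd with h | h
      · obtain ⟨c, _, hcc⟩ := h
        have hdd : p ∣ q * r := ⟨c, hcc⟩
        rw [hy] at hdd
        have hyr : y ∣ r := (Nat.mul_dvd_mul_iff_left hq.pos).mp hdd
        rcases (Nat.dvd_prime hrp).mp hyr with h' | h'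
        · exact hy1 h'
        · exact hrnd (h' ▸ (Dvd.intro_left q hy.symm))
      · obtain ⟨c, _, hcc⟩ := h
        have hdd : p ∣ y * r := ⟨c, hcc⟩
        rw [hy, mul_comm q y] at hdd
        have hqr : q ∣ r := (Nat.mul_dvd_mul_iff_left (Nat.pos_of_ne_zero hy0)).mp hdd
        have hqe : q = r := (Nat.prime_dvd_prime_iff_eq hq hrp).mp hqr
        exact hrnd (hqe ▸ Dvd.intro y hy.symm)
  · rintro ⟨hp, hp4⟩
    refine ⟨(hmem p).mpr hp4, hp.ne_one, fun b c hb hc hd => ?_⟩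
    have hb4 := (hmem b).mp hb
    have hc4 := (hmem c).mp hc
    have hdd : p ∣ b * c := by obtain ⟨d, _, hdd⟩ := hd; exact ⟨d, hdd⟩
    rcases (Nat.Prime.dvd_mul hp).mp hdd with h | h
    · exact Or.inl ((dvdIn_iff hmem hp4 hb4).mpr h)
    · exact Or.inr ((dvdIn_iff hmem hp4 hc4).mpr h)

/-- Classification of the strong atoms of the Hilbert monoid. -/
private lemma strongIn_iff {H : Submonoid ℕ} (hmem : ∀ n : ℕ, n ∈ H ↔ n % 4 = 1) (a : ℕ) :
    MulIsStrongAtomIn H a ↔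
      (Nat.Prime a ∧ a % 4 = 1) ∨ (∃ p, Nat.Prime p ∧ p % 4 = 3 ∧ a = p ^ 2) := by
  constructor
  · rintro ⟨hatom, hstrong⟩
    rcases (atomIn_iff hmem a).mp hatom with h | ⟨q, r, hq, hr, hq4, hr4, rfl⟩
    · exact Or.inl h
    · right
      refine ⟨q, hq, hq4, ?_⟩
      by_contra hne
      have hqr : q ≠ r := by rintro rfl; exact hne (sq q).symm
      have hatoms : ∀ b ∈ ({q * q, r * r} : Multiset ℕ), MulIsAtomIn H b := by
        intro b hb
        rcases Multiset.mem_cons.mp hb with h1 | h1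
        · subst h1; exact (atomIn_iff hmem _).mpr (Or.inr ⟨q, q, hq, hq, hq4, hq4, rfl⟩)
        · rw [Multiset.mem_singleton] at h1
          subst h1; exact (atomIn_iff hmem _).mpr (Or.inr ⟨r, r, hr, hr, hr4, hr4, rfl⟩)
      have hprod : ({q * q, r * r} : Multiset ℕ).prod = (q * r) ^ 2 := by
        simp [Multiset.prod_cons]; ring
      have hs := hstrong 2 (by norm_num) _ hatoms hprod
      have hmemq : q * q ∈ Multiset.replicate 2 (q * r) := by
        rw [← hs]; exact Multiset.mem_cons_self _ _
      have heq : q * q = q * r := Multiset.eq_of_mem_replicate hmemq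
      exact hqr (Nat.eq_of_mul_eq_mul_left hq.pos heq)
  · rintro (⟨hp, hp4⟩ | ⟨p, hp, hp4, rfl⟩)
    · refine ⟨(atomIn_iff hmem a).mpr (Or.inl ⟨hp, hp4⟩), fun n hn s hs hprod => ?_⟩
      have hall : ∀ b ∈ s, b = a := by
        intro b hb
        have hbd : b ∣ a ^ n := hprod ▸ Multiset.dvd_prod hb
        rcases (atomIn_iff hmem b).mp (hs b hb) with ⟨hbp, hb4⟩ | ⟨q, r, hq, hr, hq4, hr4, rfl⟩
        · exact (Nat.prime_dvd_prime_iff_eq hbp hp).mp (hbp.dvd_of_dvd_pow hbd)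
        · exfalso
          have h1 : q ∣ a ^ n := dvd_trans ⟨r, rfl⟩ hbd
          have h2 : q = a := (Nat.prime_dvd_prime_iff_eq hq hp).mp (hq.dvd_of_dvd_pow h1)
          omega
      have hsrep : s = Multiset.replicate (Multiset.card s) a :=
        Multiset.eq_replicate_card.mpr hall
      rw [hsrep, Multiset.prod_replicate] at hprod
      rw [hsrep, Nat.pow_right_injective hp.two_le hprod]
    · refine ⟨(atomIn_iff hmem _).mpr (Or.inr ⟨p, p, hp, hp, hp4, hp4, (sq p)⟩),
        fun n hn s hs hprod => ?_⟩
      have hall : ∀ b ∈ s, b = p ^ 2 := by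
        intro b hb
        have hbd : b ∣ p ^ (2 * n) := by
          rw [pow_mul]; exact hprod ▸ Multiset.dvd_prod hb
        rcases (atomIn_iff hmem b).mp (hs b hb) with ⟨hbp, hb4⟩ | ⟨q, r, hq, hr, hq4, hr4, rfl⟩
        · exfalso
          have h2 : b = p := (Nat.prime_dvd_prime_iff_eq hbp hp).mp (hbp.dvd_of_dvd_pow hbd)
          omega
        · have h1 : q = p :=
            (Nat.prime_dvd_prime_iff_eq hq hp).mp (hq.dvd_of_dvd_pow (dvd_trans ⟨r, rfl⟩ hbd))
          have h2 : r = p :=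
            (Nat.prime_dvd_prime_iff_eq hr hp).mp
              (hr.dvd_of_dvd_pow (dvd_trans ⟨q, mul_comm q r⟩ hbd))
          rw [h1, h2, sq]
      have hsrep : s = Multiset.replicate (Multiset.card s) (p ^ 2) :=
        Multiset.eq_replicate_card.mpr hall
      rw [hsrep, Multiset.prod_replicate] at hprod
      have h2 : 2 ≤ p ^ 2 := by nlinarith [hp.two_le]
      rw [hsrep, Nat.pow_right_injective h2 hprod]

/-- In the Hilbert monoid `H = 4ℕ₀ + 1`, the primes are exactly the rational primes
`p ≡ 1 (mod 4)`, and the strong atoms are these primes together with the squares `p²`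
of rational primes `p ≡ 3 (mod 4)`. -/
theorem hilbert_monoid_primes_and_strong_atoms (H : Submonoid ℕ)
    (hH : (H : Set ℕ) = {n : ℕ | n % 4 = 1}) :
    {p : ℕ | MulIsPrimeIn H p} = {p : ℕ | Nat.Prime p ∧ p % 4 = 1} ∧
    {a : ℕ | MulIsStrongAtomIn H a} =
      {p : ℕ | Nat.Prime p ∧ p % 4 = 1} ∪
      {m : ℕ | ∃ p : ℕ, Nat.Prime p ∧ p % 4 = 3 ∧ m = p ^ 2} := by
  have hmem : ∀ n : ℕ, n ∈ H ↔ n % 4 = 1 := by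
    intro n
    rw [← SetLike.mem_coe, hH]
    rfl
  constructor
  · ext p
    exact primeIn_iff hmem p
  · ext a
    simp only [Set.mem_setOf_eq, Set.mem_union]
    exact strongIn_iff hmem a
end

section
/- The Hilbert monoid H = 4ℕ₀ + 1 is half-factorial: any two factorizations into atoms of the same element of H have the same length. -/
def hw (p : ℕ) : ℕ := if p % 4 = 1 then 2 else 1
def hf (n : ℕ) : ℕ := n.factorization.sum fun p k => k * hw p

lemma hf_mul {a b : ℕ} (ha : a ≠ 0) (hb : b ≠ 0) : hf (a*b) = hf a + hf b := by
  unfold hf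
  rw [Nat.factorization_mul ha hb, Finsupp.sum_add_index]
  · intro p _; simp
  · intro p _ k l; ring

lemma hf_prime {p : ℕ} (hp : p.Prime) : hf p = hw p := by
  simp [hf, hp.factorization, Finsupp.sum_single_index]

lemma hf_one : hf 1 = 0 := by simp [hf]

lemma dvd_odd {c a : ℕ} (h : c ∣ a) (h4 : a % 4 = 1) : c % 2 = 1 := by
  rcases Nat.even_or_odd c with he | ho
  · exfalso
    have h2 : 2 ∣ a := dvd_trans he.two_dvd h
    omega
  · exact Nat.odd_iff.mp ho

lemma hf_atom {a : ℕ} (h1 : a % 4 = 1) (hne : a ≠ 1)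
    (hatom : ∀ b c : ℕ, b % 4 = 1 → c % 4 = 1 → a = b * c → b = 1 ∨ c = 1) :
    hf a = 2 := by
  have ha0 : a ≠ 0 := by omega
  by_cases hp1 : ∃ p : ℕ, p.Prime ∧ p ∣ a ∧ p % 4 = 1
  · obtain ⟨p, hp, hpa, hp4⟩ := hp1
    obtain ⟨m, hm⟩ := hpa
    have hmodd : m % 2 = 1 := dvd_odd (Dvd.intro_left p hm.symm) h1
    have hm4 : m % 4 = 1 := by
      have := Nat.mul_mod p m 4
      rw [← hm, hp4] at this
      omega
    rcases hatom p m hp4 hm4 hm with h | h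
    · exact absurd h hp.ne_one
    · subst h; simp at hm; subst hm; rw [hf_prime hp, hw]; simp [hp4]
  · push_neg at hp1
    have key : ∀ q : ℕ, q.Prime → q ∣ a → q % 4 = 3 := by
      intro q hq hqa
      have hqodd : q % 2 = 1 := dvd_odd hqa h1
      have := hp1 q hq hqa
      omega
    set q := a.minFac with hqdef
    have hq : q.Prime := Nat.minFac_prime hne
    have hqa : q ∣ a := Nat.minFac_dvd a
    have hq4 : q % 4 = 3 := key q hq hqa
    obtain ⟨m, hm⟩ := hqa
    have hm0 : m ≠ 0 := by rintro rfl; simp at hm; exact ha0 hm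
    have hm4 : m % 4 = 3 := by
      have hmodd : m % 2 = 1 := dvd_odd (Dvd.intro_left q hm.symm) h1
      have := Nat.mul_mod q m 4
      rw [← hm, hq4] at this
      omega
    have hm1 : m ≠ 1 := by omega
    set r := m.minFac with hrdef
    have hr : r.Prime := Nat.minFac_prime hm1
    have hrm : r ∣ m := Nat.minFac_dvd m
    have hra : r ∣ a := hrm.trans (Dvd.intro_left q hm.symm)
    have hr4 : r % 4 = 3 := key r hr hra
    obtain ⟨n, hn⟩ := hrm
    have hn4 : n % 4 = 1 := by
      have hna : n ∣ a := (Dvd.intro_left r hn.symm).trans (Dvd.intro_left q hm.symm)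
      have hnodd : n % 2 = 1 := dvd_odd hna h1
      have := Nat.mul_mod r n 4
      rw [← hn, hr4, hm4] at this
      omega
    have hqr4 : (q * r) % 4 = 1 := by
      have := Nat.mul_mod q r 4
      rw [hq4, hr4] at this
      omega
    have haqr : a = (q * r) * n := by rw [hm, hn]; ring
    rcases hatom (q*r) n hqr4 hn4 haqr with h | h
    · exact absurd (Nat.eq_one_of_mul_eq_one_right h) hq.ne_one
    · subst h
      rw [haqr, mul_one, hf_mul hq.ne_zero hr.ne_zero, hf_prime hq, hf_prime hr, hw, hw]
      simp [hq4, hr4]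

lemma hf_prod (s : Multiset ℕ) (hs : ∀ a ∈ s, a % 4 = 1 ∧ hf a = 2) :
    hf s.prod = 2 * Multiset.card s := by
  induction s using Multiset.induction_on with
  | empty => simp [hf_one]
  | cons a s ih =>
    have ha := hs a (Multiset.mem_cons_self a s)
    have hs' : ∀ b ∈ s, b % 4 = 1 ∧ hf b = 2 := fun b hb => hs b (Multiset.mem_cons_of_mem hb)
    have hprod0 : s.prod ≠ 0 := by
      intro h
      have h0 : (0:ℕ) ∈ s := Multiset.prod_eq_zero_iff.mp h
      have := (hs' 0 h0).1; omega
    rw [Multiset.prod_cons, hf_mul (by omega) hprod0, ha.2, ih hs']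
    simp [mul_add]
    omega


/-- The Hilbert monoid `H = 4ℕ₀ + 1` is half-factorial: any two factorizations of the same
element of `H` into atoms of `H` have the same length. -/
theorem hilbert_monoid_half_factorial (H : Submonoid ℕ)
    (hH : (H : Set ℕ) = {n : ℕ | n % 4 = 1}) :
    ∀ x ∈ H, ∀ s t : Multiset ℕ,
      (∀ a ∈ s, MulIsAtomIn H a) → (∀ a ∈ t, MulIsAtomIn H a) →
      s.prod = x → t.prod = x → Multiset.card s = Multiset.card t := by
  have hmem : ∀ n : ℕ, n ∈ H ↔ n % 4 = 1 := by
    intro n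
    rw [← SetLike.mem_coe, hH]; rfl
  have hatomf : ∀ a : ℕ, MulIsAtomIn H a → a % 4 = 1 ∧ hf a = 2 := by
    rintro a ⟨haH, hane, hsplit⟩
    have h4 : a % 4 = 1 := (hmem a).mp haH
    refine ⟨h4, hf_atom h4 hane ?_⟩
    intro b c hb hc habc
    exact hsplit b c ((hmem b).mpr hb) ((hmem c).mpr hc) habc
  intro x _ s t hs ht hsx htx
  have h1 := hf_prod s (fun a ha => hatomf a (hs a ha))
  have h2 := hf_prod t (fun a ha => hatomf a (ht a ha))
  rw [hsx] at h1; rw [htx] at h2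
  omega
end

section
/- Let M be a reduced Krull monoid with torsion class group and let A be a set of strong atoms of M. Then the submonoid ⟨A⟩ of M generated by A is a unique factorization monoid whose set of primes is A; that is, whenever ∏_{a∈A} a^{x(a)} = ∏_{a∈A} a^{y(a)} with almost all exponents zero, then x(a) = y(a) for all a ∈ A. -/
/-- `a` is an atom of the (cancellative commutative) monoid `M`. -/
def IsAtomM {M : Type*} [CancelCommMonoid M] (a : M) : Prop :=
  ¬ IsUnit a ∧ ∀ b c : M, a = b * c → IsUnit b ∨ IsUnit c

/-- `a` is a strong atom of `M`: an atom all of whose powers `a ^ n` factor uniquely into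
atoms of `M` (namely as `n` copies of `a`). -/
def IsStrongAtomM {M : Type*} [CancelCommMonoid M] (a : M) : Prop :=
  IsAtomM a ∧ ∀ n : ℕ, 0 < n → ∀ s : Multiset M,
    (∀ b ∈ s, IsAtomM b) → s.prod = a ^ n → s = Multiset.replicate n a

/-- `p` is a prime element of `M`. -/
def IsPrimeM {M : Type*} [CancelCommMonoid M] (p : M) : Prop :=
  ¬ IsUnit p ∧ ∀ b c : M, p ∣ b * c → p ∣ b ∨ p ∣ c

/-- `M` is reduced: its only unit is the identity. -/
def IsReducedM (M : Type*) [Monoid M] : Prop := ∀ u : M, IsUnit u → u = 1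

/-- `τ : M → F`, with `F` the free commutative monoid on `ι` (written multiplicatively as
`Multiplicative (ι →₀ ℕ)`), is a divisor theory: (1) `τ b ∣ τ c` implies `b ∣ c`;
(2) every `d ∈ F` is a greatest common divisor of finitely many values of `τ`. -/
def IsDivisorTheory {M ι : Type*} [CancelCommMonoid M]
    (τ : M →* Multiplicative (ι →₀ ℕ)) : Prop :=
  (∀ b c : M, τ b ∣ τ c → b ∣ c) ∧
  (∀ d : Multiplicative (ι →₀ ℕ), ∃ s : Finset M, s.Nonempty ∧
    (∀ b ∈ s, d ∣ τ b) ∧ ∀ e : Multiplicative (ι →₀ ℕ), (∀ b ∈ s, e ∣ τ b) → e ∣ d)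

/-- The class group `F/τ(M)` of the divisor theory `τ` is a torsion group: every `d ∈ F`
has a power whose class is trivial, i.e. `d ^ n · τ b = τ c` for some `n ≥ 1` and `b, c ∈ M`. -/
def HasTorsionClassGroup {M ι : Type*} [CancelCommMonoid M]
    (τ : M →* Multiplicative (ι →₀ ℕ)) : Prop :=
  ∀ d : Multiplicative (ι →₀ ℕ), ∃ n : ℕ, 0 < n ∧ ∃ b c : M, d ^ n * τ b = τ c

/-- `p` is a prime element of the submonoid `N` of `M`. -/
def IsPrimeInSub {M : Type*} [CancelCommMonoid M] (N : Submonoid M) (p : M) : Prop :=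
  p ∈ N ∧ ¬ IsUnit p ∧ ∀ b c : M, b ∈ N → c ∈ N → (∃ d ∈ N, b * c = p * d) →
    (∃ d ∈ N, b = p * d) ∨ (∃ d ∈ N, c = p * d)

section Aux
variable {M ι : Type*} [CancelCommMonoid M] {τ : M →* Multiplicative (ι →₀ ℕ)}

lemma dvd_iff_toAdd_le (d e : Multiplicative (ι →₀ ℕ)) : d ∣ e ↔ d.toAdd ≤ e.toAdd := by
  constructor
  · rintro ⟨c, rfl⟩
    exact le_iff_exists_add.2 ⟨c.toAdd, rfl⟩
  · intro h
    obtain ⟨c, hc⟩ := le_iff_exists_add.1 h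
    exact ⟨Multiplicative.ofAdd c, Multiplicative.toAdd.injective hc⟩

lemma tau_inj (hdt : IsDivisorTheory τ) (hred : IsReducedM M) : Function.Injective τ := by
  intro a b h
  obtain ⟨u, hu⟩ := hdt.1 a b (h ▸ dvd_refl _)
  obtain ⟨v, hv⟩ := hdt.1 b a (h ▸ dvd_refl _)
  have : a * (u * v) = a * 1 := by rw [mul_one, ← mul_assoc, ← hu, ← hv]
  have huv : u * v = 1 := mul_left_cancel this
  have : u = 1 := hred u (IsUnit.of_mul_eq_one _ huv)
  rw [hu, this, mul_one]

lemma unit_of_tau_eq_one (hdt : IsDivisorTheory τ) {a : M} (h : τ a = 1) : IsUnit a :=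
  isUnit_of_dvd_one (hdt.1 a 1 (by simp [h]))

lemma tau_ne_one (hdt : IsDivisorTheory τ) {a : M} (h : ¬ IsUnit a) : τ a ≠ 1 :=
  fun he => h (unit_of_tau_eq_one hdt he)

/-- weight of an element -/
noncomputable def wt (τ : M →* Multiplicative (ι →₀ ℕ)) (a : M) : ℕ :=
  (Multiplicative.toAdd (τ a)).sum fun _ n => n

lemma wt_pos (hdt : IsDivisorTheory τ) {a : M} (h : ¬ IsUnit a) : 0 < wt τ a := by
  classical
  rcases Nat.eq_zero_or_pos (wt τ a) with h0 | h1
  · exfalso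
    apply tau_ne_one hdt h
    have : Multiplicative.toAdd (τ a) = 0 := by
      ext i
      by_cases hi : i ∈ (Multiplicative.toAdd (τ a)).support
      · have := (Finset.sum_eq_zero_iff).1 h0 i hi
        simpa using this
      · simpa using Finsupp.notMem_support_iff.1 hi
    have := congrArg Multiplicative.ofAdd this
    simpa using this
  · exact h1

lemma wt_mul (a b : M) : wt τ (a * b) = wt τ a + wt τ b := by
  classical
  simp only [wt, map_mul]
  rw [toAdd_mul, Finsupp.sum_add_index (by simp) (by intros; rfl)]

lemma atomic (hdt : IsDivisorTheory τ) :
    ∀ a : M, ¬ IsUnit a → ∃ s : Multiset M, (∀ b ∈ s, IsAtomM b) ∧ s.prod = a := by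
  intro a
  induction' hw : wt τ a using Nat.strong_induction_on with n ih generalizing a
  intro ha
  by_cases hat : IsAtomM a
  · exact ⟨{a}, by simpa using hat, by simp⟩
  · have : ∃ b c : M, a = b * c ∧ ¬ IsUnit b ∧ ¬ IsUnit c := by
      simp only [IsAtomM, not_and, not_forall] at hat
      obtain ⟨b, c, h1, h2⟩ := hat ha
      push_neg at h2
      exact ⟨b, c, h1, h2⟩
    obtain ⟨b, c, rfl, hb, hc⟩ := this
    have hwb : wt τ b < n := by
      rw [← hw, wt_mul]; exact Nat.lt_add_of_pos_right (wt_pos hdt hc)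
    have hwc : wt τ c < n := by
      rw [← hw, wt_mul]; exact Nat.lt_add_of_pos_left (wt_pos hdt hb)
    obtain ⟨s, hs, hsp⟩ := ih _ hwb b rfl hb
    obtain ⟨t, ht, htp⟩ := ih _ hwc c rfl hc
    exact ⟨s + t, fun x hx => (Multiset.mem_add.1 hx).elim (hs x) (ht x),
      by rw [Multiset.prod_add, hsp, htp]⟩

lemma eq_of_atom_dvd_pow (hdt : IsDivisorTheory τ) (hred : IsReducedM M)
    {a b : M} (ha : IsStrongAtomM a) (hb : IsAtomM b) {n : ℕ} (hn : 0 < n)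
    (h : b ∣ a ^ n) : b = a := by
  obtain ⟨c, hc⟩ := h
  by_cases hcu : IsUnit c
  · have : c = 1 := hred c hcu
    subst this
    have := ha.2 n hn {b} (by simpa using hb) (by simp [hc])
    have hm : b ∈ Multiset.replicate n a := this ▸ Multiset.mem_singleton_self b
    exact Multiset.eq_of_mem_replicate hm
  · obtain ⟨s, hs, hsp⟩ := atomic hdt c hcu
    have := ha.2 n hn (b ::ₘ s)
      (fun x hx => (Multiset.mem_cons.1 hx).elim (fun h => h ▸ hb) (hs x))
      (by rw [Multiset.prod_cons, hsp, ← hc])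
    have hm : b ∈ Multiset.replicate n a := this ▸ Multiset.mem_cons_self b s
    exact Multiset.eq_of_mem_replicate hm

lemma torsion' (hdt : IsDivisorTheory τ) (htor : HasTorsionClassGroup τ)
    (d : Multiplicative (ι →₀ ℕ)) : ∃ n : ℕ, 0 < n ∧ ∃ q : M, τ q = d ^ n := by
  obtain ⟨n, hn, b, c, h⟩ := htor d
  have hbc : b ∣ c := hdt.1 b c ⟨d ^ n, by rw [← h, mul_comm]⟩
  obtain ⟨q, rfl⟩ := hbc
  refine ⟨n, hn, q, ?_⟩
  have : d ^ n * τ b = τ q * τ b := by rw [h, map_mul, mul_comm]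
  exact (mul_right_cancel this).symm

lemma strong_atom_tau (hdt : IsDivisorTheory τ) (htor : HasTorsionClassGroup τ)
    (hred : IsReducedM M) {a : M} (ha : IsStrongAtomM a) :
    ∃ i : ι, ∃ e : ℕ, 0 < e ∧ τ a = Multiplicative.ofAdd (Finsupp.single i e) := by
  classical
  have hne : Multiplicative.toAdd (τ a) ≠ 0 := by
    intro h
    apply tau_ne_one hdt ha.1.1
    have := congrArg Multiplicative.ofAdd h
    simpa using this
  obtain ⟨i, hi⟩ := Finsupp.support_nonempty_iff.2 hne
  have hipos : 0 < Multiplicative.toAdd (τ a) i := Nat.pos_of_ne_zero (Finsupp.mem_support_iff.1 hi)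
  obtain ⟨n, hn, q, hq⟩ := torsion' hdt htor (Multiplicative.ofAdd (Finsupp.single i 1))
  -- q is a nonunit
  have hqne : τ q ≠ 1 := by
    rw [hq]
    intro h
    have := congrArg Multiplicative.toAdd h
    simp only [toAdd_pow, toAdd_ofAdd, toAdd_one] at this
    have := congrFun (congrArg DFunLike.coe this) i
    simp [Finsupp.single_apply] at this
    omega
  have hqnu : ¬ IsUnit q := by
    intro h
    exact hqne (by rw [hred q h, map_one])
  -- q ∣ a ^ n
  have hqd : q ∣ a ^ n := by
    apply hdt.1
    rw [hq, map_pow, dvd_iff_toAdd_le]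
    simp only [toAdd_pow, toAdd_ofAdd]
    intro j
    simp only [Finsupp.smul_apply, smul_eq_mul]
    rcases eq_or_ne j i with rfl | hj
    · rw [Finsupp.single_apply, if_pos rfl]
      calc n * 1 = n := mul_one n
      _ ≤ n * Multiplicative.toAdd (τ a) j := Nat.le_mul_of_pos_right n hipos
    · rw [Finsupp.single_apply, if_neg (Ne.symm hj)]
      simp
  -- every atomic factorization of q consists of copies of a, hence q = a ^ k
  obtain ⟨s, hs, hsp⟩ := atomic hdt q hqnu
  have hsa : ∀ x ∈ s, x = a := by
    intro x hx
    exact eq_of_atom_dvd_pow hdt hred ha (hs x hx) hn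
      (dvd_trans (hsp ▸ Multiset.dvd_prod hx) hqd)
  have hqa : q = a ^ Multiset.card s := by
    rw [← hsp]
    have : s = Multiset.replicate (Multiset.card s) a := Multiset.eq_replicate_card.2 hsa
    rw [this]
    simp [Multiset.prod_replicate]
  have hcard : 0 < Multiset.card s := by
    rcases Nat.eq_zero_or_pos (Multiset.card s) with h0 | h1
    · exfalso; apply hqne; rw [hqa, h0, pow_zero, map_one]
    · exact h1
  -- single i n = card s • toAdd (τ a)
  have hkey : Finsupp.single i n = Multiset.card s • Multiplicative.toAdd (τ a) := by
    have := congrArg Multiplicative.toAdd (hq.symm.trans (by rw [hqa, map_pow]))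
    simpa [toAdd_pow] using this
  refine ⟨i, Multiplicative.toAdd (τ a) i, hipos, ?_⟩
  have heq : Multiplicative.toAdd (τ a)
      = Finsupp.single i (Multiplicative.toAdd (τ a) i) := by
    ext j
    rcases eq_or_ne j i with rfl | hj
    · rw [Finsupp.single_apply, if_pos rfl]
    · have h2 := congrFun (congrArg DFunLike.coe hkey) j
      rw [Finsupp.single_apply, if_neg (Ne.symm hj)] at h2
      simp only [Finsupp.smul_apply, smul_eq_mul] at h2
      have hz : Multiplicative.toAdd (τ a) j = 0 :=
        (Nat.mul_eq_zero.mp h2.symm).resolve_left (Nat.pos_iff_ne_zero.mp hcard)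
      rw [Finsupp.single_apply, if_neg (Ne.symm hj), hz]
  exact Multiplicative.toAdd.injective (by simpa using heq)

lemma strong_atom_same_index (hdt : IsDivisorTheory τ) (hred : IsReducedM M)
    {a b : M} (ha : IsStrongAtomM a) (hb : IsStrongAtomM b)
    {i : ι} {e f : ℕ} (he : 0 < e) (hf : 0 < f)
    (hta : τ a = Multiplicative.ofAdd (Finsupp.single i e))
    (htb : τ b = Multiplicative.ofAdd (Finsupp.single i f)) : a = b := by
  have htau : τ (a ^ f) = τ (b ^ e) := by
    rw [map_pow, map_pow, hta, htb]
    apply Multiplicative.toAdd.injective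
    simp only [toAdd_pow, toAdd_ofAdd, Finsupp.smul_single, smul_eq_mul]
    rw [mul_comm]
  have hpow : a ^ f = b ^ e := tau_inj hdt hred htau
  have hbdvd : b ∣ a ^ f := hpow ▸ dvd_pow_self b (Nat.pos_iff_ne_zero.mp he)
  exact (eq_of_atom_dvd_pow hdt hred ha hb.1 hf hbdvd).symm

lemma unique_exponents (hdt : IsDivisorTheory τ) (htor : HasTorsionClassGroup τ)
    (hred : IsReducedM M) (A : Set M) (hA : ∀ a ∈ A, IsStrongAtomM a) :
    ∀ x y : M →₀ ℕ, ↑x.support ⊆ A → ↑y.support ⊆ A →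
      (x.prod fun a n => a ^ n) = (y.prod fun a n => a ^ n) → x = y := by
  classical
  have key : ∀ a : A, ∃ i : ι, ∃ e : ℕ, 0 < e ∧
      τ (a : M) = Multiplicative.ofAdd (Finsupp.single i e) :=
    fun a => strong_atom_tau hdt htor hred (hA a a.2)
  choose I E hE hT using key
  have Iinj : ∀ a b : A, I a = I b → (a : M) = b := by
    intro a b h
    exact strong_atom_same_index hdt hred (hA a a.2) (hA b b.2) (hE a) (hE b)
      (hT a) (h ▸ hT b)
  have eval : ∀ (x : M →₀ ℕ) (hx : ↑x.support ⊆ A) (a : M) (ha : a ∈ A),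
      Multiplicative.toAdd (τ (x.prod fun a n => a ^ n)) (I ⟨a, ha⟩)
        = x a * E ⟨a, ha⟩ := by
    intro x hx a ha
    rw [map_finsuppProd, Finsupp.prod, toAdd_prod, Finsupp.finset_sum_apply]
    have hterm : ∀ b ∈ x.support,
        Multiplicative.toAdd (τ (b ^ x b)) (I ⟨a, ha⟩)
          = if b = a then x b * E ⟨a, ha⟩ else 0 := by
      intro b hb
      have hbA : b ∈ A := hx hb
      rw [map_pow]
      simp only [toAdd_pow, Finsupp.smul_apply, smul_eq_mul]
      rw [hT ⟨b, hbA⟩]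
      simp only [toAdd_ofAdd, Finsupp.single_apply]
      by_cases hba : b = a
      · subst hba
        rw [if_pos rfl, if_pos rfl]
      · rw [if_neg hba, if_neg, mul_zero]
        intro hIeq
        exact hba (Iinj ⟨b, hbA⟩ ⟨a, ha⟩ hIeq)
    rw [Finset.sum_congr rfl hterm, Finset.sum_ite_eq' x.support a
      (fun b => x b * E ⟨a, ha⟩)]
    by_cases hmem : a ∈ x.support
    · rw [if_pos hmem]
    · rw [if_neg hmem, Finsupp.notMem_support_iff.1 hmem, zero_mul]
  intro x y hx hy hxy
  ext a
  by_cases haA : a ∈ A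
  · have h1 := eval x hx a haA
    have h2 := eval y hy a haA
    rw [hxy, h2] at h1
    exact Nat.eq_of_mul_eq_mul_right (hE ⟨a, haA⟩) (h1.symm)
  · rw [Finsupp.notMem_support_iff.1 (fun h => haA (hx h)),
      Finsupp.notMem_support_iff.1 (fun h => haA (hy h))]

lemma closure_mem_prod (A : Set M) {p : M} (hp : p ∈ Submonoid.closure A) :
    ∃ x : M →₀ ℕ, ↑x.support ⊆ A ∧ (x.prod fun a n => a ^ n) = p := by
  classical
  induction hp using Submonoid.closure_induction with
  | mem a ha =>
    refine ⟨Finsupp.single a 1, ?_, by simp⟩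
    rw [Finsupp.support_single_ne_zero _ one_ne_zero]
    simpa using ha
  | one => exact ⟨0, by simp, by simp⟩
  | mul b c _ _ hb hc =>
    obtain ⟨xb, hxb, hpb⟩ := hb
    obtain ⟨xc, hxc, hpc⟩ := hc
    refine ⟨xb + xc, ?_, ?_⟩
    · refine subset_trans ?_ (by exact Set.union_subset hxb hxc :
        (↑xb.support ∪ ↑xc.support : Set M) ⊆ A)
      intro z hz
      have := Finsupp.support_add (g₁ := xb) (g₂ := xc) hz
      simpa using this
    · rw [Finsupp.prod_add_index' (by simp) (fun a m n => pow_add a m n), hpb, hpc]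

lemma prod_mem_closure (A : Set M) (x : M →₀ ℕ) (hx : ↑x.support ⊆ A) :
    (x.prod fun a n => a ^ n) ∈ Submonoid.closure A :=
  Submonoid.prod_mem _ fun b hb =>
    pow_mem (Submonoid.subset_closure (hx hb)) _

lemma dvd_in_closure (A : Set M) (x : M →₀ ℕ) (hx : ↑x.support ⊆ A) {a : M}
    (ha : a ∈ x.support) :
    ∃ r ∈ Submonoid.closure A, (x.prod fun a n => a ^ n) = a * r := by
  classical
  have hsub : ↑(x.erase a).support ⊆ A := by
    intro z hz
    apply hx
    rw [Finsupp.support_erase] at hz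
    exact Finset.mem_coe.2 (Finset.mem_of_mem_erase hz)
  refine ⟨a ^ (x a - 1) * (x.erase a).prod fun b n => b ^ n,
    mul_mem (pow_mem (Submonoid.subset_closure (hx ha)) _)
      (prod_mem_closure A _ hsub), ?_⟩
  conv_lhs => rw [← Finsupp.mul_prod_erase x a (fun b n => b ^ n) ha]
  rw [← mul_assoc]
  congr 1
  rw [← pow_succ']
  congr 1
  have := Finsupp.mem_support_iff.1 ha
  omega

end Aux

/-- In a reduced Krull monoid with torsion class group, the submonoid generated by any set
`A` of strong atoms is a unique factorization monoid whose set of primes is `A`: products of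
elements of `A` have unique exponents, and the primes of `⟨A⟩` are exactly the elements of `A`. -/
theorem submonoid_generated_by_strong_atoms_is_UFM
    {M ι : Type*} [CancelCommMonoid M] (τ : M →* Multiplicative (ι →₀ ℕ))
    (hdt : IsDivisorTheory τ) (htor : HasTorsionClassGroup τ) (hred : IsReducedM M)
    (A : Set M) (hA : ∀ a ∈ A, IsStrongAtomM a) :
    (∀ x y : M →₀ ℕ, ↑x.support ⊆ A → ↑y.support ⊆ A →
      (x.prod fun a n => a ^ n) = (y.prod fun a n => a ^ n) → x = y) ∧
    {p : M | IsPrimeInSub (Submonoid.closure A) p} = A := by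
  classical
  have huniq := unique_exponents hdt htor hred A hA
  have hsupadd : ∀ u v : M →₀ ℕ, ↑u.support ⊆ A → ↑v.support ⊆ A →
      ↑(u + v).support ⊆ A := by
    intro u v hu hv z hz
    have hz' := Finsupp.support_add (g₁ := u) (g₂ := v) hz
    rcases Finset.mem_union.1 hz' with h | h
    exacts [hu h, hv h]
  refine ⟨huniq, ?_⟩
  ext p
  simp only [Set.mem_setOf_eq]
  constructor
  · rintro ⟨hpm, hpu, hpprime⟩
    obtain ⟨x, hxs, hxp⟩ := closure_mem_prod A hpm
    have hxne : x ≠ 0 := by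
      rintro rfl
      rw [Finsupp.prod_zero_index] at hxp
      exact hpu (hxp ▸ isUnit_one)
    obtain ⟨a0, ha0⟩ := Finsupp.support_nonempty_iff.2 hxne
    have ha0A : a0 ∈ A := hxs ha0
    obtain ⟨r, hr, hpr⟩ := dvd_in_closure A x hxs ha0
    rw [hxp] at hpr
    rcases hpprime a0 r (Submonoid.subset_closure ha0A) hr
        ⟨1, one_mem _, by rw [mul_one, ← hpr]⟩ with ⟨d, hd, had⟩ | ⟨d, hd, hrd⟩
    · rcases (hA a0 ha0A).1.2 p d had with hup | hud
      · exact absurd hup hpu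
      · have hd1 : d = 1 := hred d hud
        rw [hd1, mul_one] at had
        exact had ▸ ha0A
    · exfalso
      rw [hrd] at hpr
      have hcan : p * 1 = p * (d * a0) := by
        rw [mul_one]
        calc p = a0 * (p * d) := hpr
        _ = p * (d * a0) := by rw [mul_comm a0, mul_assoc]
      have h1 : (1 : M) = d * a0 := mul_left_cancel hcan
      exact (hA a0 ha0A).1.1 (IsUnit.of_mul_eq_one (a := a0) d (by rw [mul_comm]; exact h1.symm))
  · intro haA
    refine ⟨Submonoid.subset_closure haA, (hA p haA).1.1, ?_⟩
    intro b c hb hc hex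
    obtain ⟨d, hd, hbc⟩ := hex
    obtain ⟨xb, hxb, hpb⟩ := closure_mem_prod A hb
    obtain ⟨xc, hxc, hpc⟩ := closure_mem_prod A hc
    obtain ⟨xd, hxd, hpd⟩ := closure_mem_prod A hd
    have hsings : ↑(Finsupp.single p 1).support ⊆ A := by
      rw [Finsupp.support_single_ne_zero _ one_ne_zero]
      simpa using haA
    have heq : xb + xc = Finsupp.single p 1 + xd := by
      apply huniq _ _ (hsupadd _ _ hxb hxc) (hsupadd _ _ hsings hxd)
      rw [Finsupp.prod_add_index' (by simp) (fun a m n => pow_add a m n),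
        Finsupp.prod_add_index' (by simp) (fun a m n => pow_add a m n),
        hpb, hpc, hpd, Finsupp.prod_single_index (by simp), pow_one, hbc]
    have hval : xb p + xc p = 1 + xd p := by
      have := congrFun (congrArg DFunLike.coe heq) p
      simpa [Finsupp.single_eq_same] using this
    rcases Nat.eq_zero_or_pos (xb p) with hb0 | hb1
    · have hc1 : 0 < xc p := by omega
      obtain ⟨r, hr, hcr⟩ := dvd_in_closure A xc hxc
        (Finsupp.mem_support_iff.2 (Nat.pos_iff_ne_zero.mp hc1))
      exact Or.inr ⟨r, hr, by rw [← hpc, hcr]⟩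
    · obtain ⟨r, hr, hbr⟩ := dvd_in_closure A xb hxb
        (Finsupp.mem_support_iff.2 (Nat.pos_iff_ne_zero.mp hb1))
      exact Or.inl ⟨r, hr, by rw [← hpb, hbr]⟩
end
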